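/- arXiv:1008.4180 — 8 statements merged into one kernel-verified Lean document; each statement's English description precedes it below -/
import Mathlib

section
/- There exists an absolute constant C > 0 with the following property. For all integers N ≥ 2 and M ≥ 2, every nonempty subset X of {1, 2, …, 10^M}, and every real Δ ≥ 1, the number of primes p ≤ N for which the inequality | #{x mod p : x ∈ X} − |X| | ≤ C·|X| / (1 + π(N)·log M / (M·|X|·Δ)) FAILS is at most C·π(N)/Δ. -/
open Finset

section Aux

-- Lemma A: card X ≤ card image + collision count
lemma lemA (X : Finset ℕ) (p : ℕ) :
    X.card ≤ (X.image (fun x => x % p)).card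
      + (X.offDiag.filter (fun q => q.1 % p = q.2 % p)).card := by
  classical
  set g : ℕ → ℕ := fun x => x % p with hg
  have h1 : X.card = ∑ r ∈ X.image g, (X.filter (fun x => g x = r)).card :=
    Finset.card_eq_sum_card_image g X
  have h2 : (X.offDiag.filter (fun q => g q.1 = g q.2)).card
      = ∑ r ∈ X.image g, ((X.offDiag.filter (fun q => g q.1 = g q.2)).filter
          (fun q => g q.1 = r)).card := by
    apply Finset.card_eq_sum_card_fiberwise
    intro q hq
    simp only [mem_coe, mem_filter, mem_offDiag] at hq
    exact mem_image_of_mem g hq.1.1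
  have h3 : (X.image g).card = ∑ r ∈ X.image g, 1 := by simp
  rw [h1, h2, h3, ← Finset.sum_add_distrib]
  apply Finset.sum_le_sum
  intro r hr
  set F := X.filter (fun x => g x = r) with hF
  have hFne : F.Nonempty := by
    obtain ⟨x, hx, hgx⟩ := Finset.mem_image.mp hr
    exact ⟨x, Finset.mem_filter.mpr ⟨hx, hgx⟩⟩
  have hsub : F.offDiag ⊆ (X.offDiag.filter (fun q => g q.1 = g q.2)).filter
      (fun q => g q.1 = r) := by
    intro q hq
    simp only [mem_offDiag, mem_filter, hF] at hq ⊢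
    exact ⟨⟨⟨hq.1.1, hq.2.1.1, hq.2.2⟩, by rw [hq.1.2, hq.2.1.2]⟩, hq.1.2⟩
  have hcard : F.offDiag.card ≤ _ := Finset.card_le_card hsub
  have hoff : F.offDiag.card = F.card * F.card - F.card := Finset.offDiag_card (s := F)
  have hpos : 1 ≤ F.card := hFne.card_pos
  have hsq : F.card * F.card + 1 ≥ 2 * F.card := by nlinarith
  omega

-- Lemma B: swap sums
lemma lemB (X P : Finset ℕ) :
    ∑ p ∈ P, (X.offDiag.filter (fun q => q.1 % p = q.2 % p)).card
      = ∑ q ∈ X.offDiag, (P.filter (fun p => q.1 % p = q.2 % p)).card := by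
  classical
  simp only [Finset.card_filter]
  exact Finset.sum_comm

-- divisibility from equal residues
lemma lemDvd {p x y : ℕ} (h : x % p = y % p) (hxy : x ≠ y) :
    p ∣ (max x y - min x y) := by
  rcases le_total x y with hle | hle
  · rw [max_eq_right hle, min_eq_left hle]
    exact (Nat.modEq_iff_dvd' hle).mp h
  · rw [max_eq_left hle, min_eq_right hle]
    exact (Nat.modEq_iff_dvd' hle).mp h.symm

-- Lemma C : divisor count bound
lemma lemC {M d : ℕ} (hM : 2 ≤ M) (hd : 0 < d) (hdle : d ≤ 10 ^ M)
    (S : Finset ℕ) (hS : ∀ p ∈ S, p.Prime ∧ M < p * p ∧ p ∣ d) :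
    (S.card : ℝ) ≤ 2 * M * Real.log 10 / Real.log M := by
  have hprod : ∏ p ∈ S, p ∣ d :=
    Finset.prod_primes_dvd d (fun p hp => (hS p hp).1.prime) (fun p hp => (hS p hp).2.2)
  have hle : ∏ p ∈ S, p ≤ d := Nat.le_of_dvd hd hprod
  have hpow : M ^ S.card ≤ d * d := by
    calc M ^ S.card = ∏ _p ∈ S, M := by rw [Finset.prod_const]
    _ ≤ ∏ p ∈ S, p * p := Finset.prod_le_prod' (fun p hp => le_of_lt (hS p hp).2.1)
    _ = (∏ p ∈ S, p) * (∏ p ∈ S, p) := by rw [← Finset.prod_mul_distrib]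
    _ ≤ d * d := Nat.mul_le_mul hle hle
  have hpow2 : (M : ℝ) ^ S.card ≤ (10 : ℝ) ^ (2 * M) := by
    have : (M : ℝ) ^ S.card ≤ ((d : ℝ)) * d := by exact_mod_cast hpow
    calc (M : ℝ) ^ S.card ≤ (d : ℝ) * d := this
    _ ≤ (10 : ℝ) ^ M * 10 ^ M := by
        have : (d : ℝ) ≤ (10 : ℝ) ^ M := by exact_mod_cast hdle
        have hd0 : (0:ℝ) ≤ d := by positivity
        nlinarith
    _ = (10 : ℝ) ^ (2 * M) := by rw [two_mul, pow_add]
  have hlogM : 0 < Real.log M := Real.log_pos (by exact_mod_cast hM)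
  have hlog := Real.log_le_log (by positivity) hpow2
  rw [Real.log_pow, Real.log_pow] at hlog
  rw [le_div_iff₀ hlogM]
  calc (S.card : ℝ) * Real.log M ≤ ((2 * M : ℕ) : ℝ) * Real.log 10 := by exact_mod_cast hlog
  _ = 2 * M * Real.log 10 := by push_cast; ring

end Aux

set_option maxHeartbeats 2000000 in
/-- **Theorem 2 (value set of a sparse set modulo most primes).**
There is an absolute constant `C > 0` such that for all integers `N ≥ 2`, `M ≥ 2`,
every nonempty `X ⊆ {1, …, 10^M}` and every real `Δ ≥ 1`, the number of primes
`p ≤ N` for which `| #{x mod p : x ∈ X} − |X| | ≤ C·|X| / (1 + π(N)·log M / (M·|X|·Δ))`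
fails is at most `C·π(N)/Δ`. -/
theorem stmt_1 :
    ∃ C : ℝ, 0 < C ∧
      ∀ N M : ℕ, 2 ≤ N → 2 ≤ M →
        ∀ X : Finset ℕ, X ⊆ Finset.Icc 1 (10 ^ M) → X.Nonempty →
          ∀ Δ : ℝ, 1 ≤ Δ →
            ({p : ℕ | p ≤ N ∧ p.Prime ∧
                ¬ (|((X.image (fun x => x % p)).card : ℝ) - (X.card : ℝ)| ≤
                    C * (X.card : ℝ) /
                      (1 + (N.primeCounting : ℝ) * Real.log M /
                        ((M : ℝ) * (X.card : ℝ) * Δ)))}.ncard : ℝ)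
              ≤ C * (N.primeCounting : ℝ) / Δ := by
  classical
  refine ⟨10, by norm_num, ?_⟩
  intro N M hN hM X hX hXne Δ hΔ
  have hΔ0 : (0:ℝ) < Δ := by linarith
  have hK1 : (1:ℝ) ≤ (X.card : ℝ) := by exact_mod_cast hXne.card_pos
  have hK0 : (0:ℝ) < (X.card : ℝ) := by linarith
  have hM1R : (1:ℝ) < (M:ℝ) := by exact_mod_cast hM
  have hM0 : (0:ℝ) < (M:ℝ) := by linarith
  have hlogM : 0 < Real.log M := Real.log_pos hM1R
  set π : ℝ := (N.primeCounting : ℝ) with hπ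
  have hπ0 : (0:ℝ) ≤ π := by positivity
  set t : ℝ := π * Real.log M / ((M:ℝ) * (X.card:ℝ) * Δ) with ht
  have ht0 : (0:ℝ) ≤ t := div_nonneg (mul_nonneg hπ0 hlogM.le) (by positivity)
  obtain ⟨Bad, hBad⟩ : ∃ B : Finset ℕ, B = (Finset.range (N+1)).filter
      (fun p => p.Prime ∧ ¬ (|((X.image (fun x => x % p)).card : ℝ) - (X.card:ℝ)| ≤
          10 * (X.card:ℝ) / (1 + t))) := ⟨_, rfl⟩
  have hset : {p : ℕ | p ≤ N ∧ p.Prime ∧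
        ¬ (|((X.image (fun x => x % p)).card : ℝ) - (X.card : ℝ)| ≤
            10 * (X.card : ℝ) / (1 + t))} = (Bad : Set ℕ) := by
    ext p
    simp only [hBad, Finset.coe_filter, Set.mem_setOf_eq, Finset.mem_range, Nat.lt_succ_iff]
  rw [hset, Set.ncard_coe_finset]
  rcases Finset.eq_empty_or_nonempty Bad with hBe | ⟨p0, hp0⟩
  · rw [hBe]
    simp only [Finset.card_empty, Nat.cast_zero]
    positivity
  -- t > 9
  have hp0' := Finset.mem_filter.mp (hBad ▸ hp0)
  have hfail := hp0'.2.2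
  have hE_le : ((X.image (fun x => x % p0)).card : ℝ) ≤ (X.card:ℝ) := by
    exact_mod_cast Finset.card_image_le
  have hE0 : (0:ℝ) ≤ ((X.image (fun x => x % p0)).card : ℝ) := Nat.cast_nonneg _
  have habs : |((X.image (fun x => x % p0)).card : ℝ) - (X.card:ℝ)| ≤ (X.card:ℝ) := by
    rw [abs_le]; constructor <;> linarith
  have h1t : (0:ℝ) < 1 + t := by linarith
  have ht9 : 9 < t := by
    by_contra h
    push_neg at h
    apply hfail
    refine le_trans habs ?_
    rw [le_div_iff₀ h1t]
    nlinarith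
  have htpos : (0:ℝ) < t := by linarith
  have hden : (0:ℝ) < (M:ℝ) * (X.card:ℝ) * Δ := mul_pos (mul_pos hM0 hK0) hΔ0
  have hkey : 9 * ((M:ℝ) * (X.card:ℝ) * Δ) < π * Real.log M := by
    rw [ht, lt_div_iff₀ hden] at ht9
    linarith
  have hπpos : (0:ℝ) < π := by nlinarith
  -- split
  obtain ⟨B1, hB1⟩ : ∃ B : Finset ℕ, B = Bad.filter (fun p => p * p ≤ M) := ⟨_, rfl⟩
  obtain ⟨B2, hB2⟩ : ∃ B : Finset ℕ, B = Bad.filter (fun p => ¬ p * p ≤ M) := ⟨_, rfl⟩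
  have hsplit : B1.card + B2.card = Bad.card := by
    rw [hB1, hB2]
    exact Finset.card_filter_add_card_filter_not (s := Bad) (p := fun p => p * p ≤ M)
  -- bound B1
  have hB1sub : B1 ⊆ Finset.Icc 2 (Nat.sqrt M) := by
    intro p hp
    have hp' := Finset.mem_filter.mp (hB1 ▸ hp)
    have hpB := (Finset.mem_filter.mp (hBad ▸ hp'.1)).2
    exact Finset.mem_Icc.mpr ⟨hpB.1.two_le, Nat.le_sqrt'.mpr (by rw [pow_two]; exact hp'.2)⟩
  have hB1le : (B1.card : ℝ) ≤ Real.sqrt M := by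
    have h1 : B1.card ≤ Nat.sqrt M := le_trans (Finset.card_le_card hB1sub)
      (by rw [Nat.card_Icc]; omega)
    have h2 : ((Nat.sqrt M : ℕ) : ℝ) ≤ Real.sqrt M := Real.nat_sqrt_le_real_sqrt
    exact le_trans (by exact_mod_cast h1) h2
  have hsqrt_pos : (0:ℝ) < Real.sqrt M := Real.sqrt_pos.mpr hM0
  have hlogsqrt : Real.log M ≤ 2 * Real.sqrt M := by
    have h1 := Real.log_le_sub_one_of_pos hsqrt_pos
    have h2 : Real.log (Real.sqrt M) = Real.log M / 2 := Real.log_sqrt hM0.le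
    linarith [h2 ▸ h1]
  have hss : Real.sqrt M * Real.sqrt M = (M:ℝ) := Real.mul_self_sqrt hM0.le
  have hsM : Real.sqrt M * Real.log M ≤ 2 * M := by nlinarith [Real.sqrt_nonneg (M:ℝ)]
  have e1 : (B1.card : ℝ) * Real.log M ≤ 2 * M :=
    le_trans (mul_le_mul_of_nonneg_right hB1le hlogM.le) hsM
  have e2 : 9 * ((M:ℝ) * Δ) ≤ π * Real.log M := by nlinarith
  have hB1final : (B1.card : ℝ) ≤ (2/9) * (π / Δ) := by
    rw [show (2/9 : ℝ) * (π / Δ) = (2/9) * π / Δ by ring, le_div_iff₀ hΔ0]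
    have e3 : (B1.card : ℝ) * Δ * Real.log M ≤ (2/9) * π * Real.log M := by
      nlinarith [mul_le_mul_of_nonneg_right e1 hΔ0.le]
    exact le_of_mul_le_mul_right e3 hlogM
  -- bound B2
  have hclow : ∀ p ∈ B2, 9 * (X.card:ℝ) / t ≤
      ((X.offDiag.filter (fun q => q.1 % p = q.2 % p)).card : ℝ) := by
    intro p hp
    have hp' := Finset.mem_filter.mp (hB2 ▸ hp)
    have hpB := (Finset.mem_filter.mp (hBad ▸ hp'.1)).2
    have hfailp := hpB.2
    have hEp_le : ((X.image (fun x => x % p)).card : ℝ) ≤ (X.card:ℝ) := by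
      exact_mod_cast Finset.card_image_le
    have hlow : 10 * (X.card:ℝ) / (1 + t) <
        |((X.image (fun x => x % p)).card : ℝ) - (X.card:ℝ)| := lt_of_not_ge hfailp
    have habsp : |((X.image (fun x => x % p)).card : ℝ) - (X.card:ℝ)|
        = (X.card:ℝ) - ((X.image (fun x => x % p)).card : ℝ) := by
      rw [abs_sub_comm, abs_of_nonneg (by linarith)]
    have hlemA : (X.card : ℝ) ≤ ((X.image (fun x => x % p)).card : ℝ) +
        ((X.offDiag.filter (fun q => q.1 % p = q.2 % p)).card : ℝ) := by
      exact_mod_cast lemA X p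
    have hq1 : 9 * (X.card:ℝ) / t ≤ 10 * (X.card:ℝ) / (1 + t) := by
      rw [div_le_div_iff₀ htpos h1t]
      nlinarith
    rw [habsp] at hlow
    linarith
  have hsum1 : (B2.card : ℝ) * (9 * (X.card:ℝ) / t) ≤
      ∑ p ∈ B2, ((X.offDiag.filter (fun q => q.1 % p = q.2 % p)).card : ℝ) := by
    have := Finset.card_nsmul_le_sum B2
      (fun p => ((X.offDiag.filter (fun q => q.1 % p = q.2 % p)).card : ℝ))
      (9 * (X.card:ℝ) / t) hclow
    simpa [nsmul_eq_mul] using this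
  have hsum3 : ∀ q ∈ X.offDiag,
      ((B2.filter (fun p => q.1 % p = q.2 % p)).card : ℝ) ≤
        2 * M * Real.log 10 / Real.log M := by
    intro q hq
    rw [Finset.mem_offDiag] at hq
    obtain ⟨hq1X, hq2X, hqne⟩ := hq
    have hx1 := Finset.mem_Icc.mp (hX hq1X)
    have hx2 := Finset.mem_Icc.mp (hX hq2X)
    have hd : 0 < max q.1 q.2 - min q.1 q.2 := by
      rcases Nat.lt_or_ge q.1 q.2 with h | h
      · rw [max_eq_right h.le, min_eq_left h.le]; omega
      · have h2 : q.2 < q.1 := lt_of_le_of_ne h (Ne.symm hqne)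
        omega
    apply lemC hM hd (by omega : max q.1 q.2 - min q.1 q.2 ≤ 10 ^ M)
    intro p hp
    have hp' := Finset.mem_filter.mp hp
    have hpB2 := Finset.mem_filter.mp (hB2 ▸ hp'.1)
    have hpB := (Finset.mem_filter.mp (hBad ▸ hpB2.1)).2
    exact ⟨hpB.1, lt_of_not_ge hpB2.2, lemDvd hp'.2 hqne⟩
  have hsum2 : ∑ p ∈ B2, ((X.offDiag.filter (fun q => q.1 % p = q.2 % p)).card : ℝ) ≤
      ((X.card:ℝ) * (X.card:ℝ)) * (2 * M * Real.log 10 / Real.log M) := by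
    have hB := lemB X B2
    have hsum := Finset.sum_le_card_nsmul X.offDiag
      (fun q => ((B2.filter (fun p => q.1 % p = q.2 % p)).card : ℝ))
      (2 * M * Real.log 10 / Real.log M) hsum3
    have hcast : ∑ p ∈ B2, ((X.offDiag.filter (fun q => q.1 % p = q.2 % p)).card : ℝ)
        = ∑ q ∈ X.offDiag, ((B2.filter (fun p => q.1 % p = q.2 % p)).card : ℝ) := by
      exact_mod_cast hB
    rw [hcast]
    refine le_trans hsum ?_
    rw [nsmul_eq_mul]
    have hoffle : ((X.offDiag.card : ℕ) : ℝ) ≤ (X.card:ℝ) * (X.card:ℝ) := by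
      have : X.offDiag.card ≤ X.card * X.card := by
        rw [Finset.offDiag_card]; omega
      exact_mod_cast this
    have hbnd : (0:ℝ) ≤ 2 * M * Real.log 10 / Real.log M := by
      have : (0:ℝ) < Real.log 10 := Real.log_pos (by norm_num)
      positivity
    exact mul_le_mul_of_nonneg_right hoffle hbnd
  have hA : (B2.card : ℝ) * (9 * (X.card:ℝ) / t) ≤
      ((X.card:ℝ) * (X.card:ℝ)) * (2 * M * Real.log 10 / Real.log M) :=
    le_trans hsum1 hsum2
  have hKne : (X.card:ℝ) ≠ 0 := ne_of_gt hK0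
  have hLMne : Real.log M ≠ 0 := ne_of_gt hlogM
  have hB2final : (B2.card : ℝ) ≤ 2 * (π / Δ) := by
    have step : (B2.card : ℝ) = (B2.card : ℝ) * (9 * (X.card:ℝ) / t) * (t / (9 * (X.card:ℝ))) := by
      field_simp
    have hmul : (B2.card : ℝ) ≤
        ((X.card:ℝ) * (X.card:ℝ)) * (2 * M * Real.log 10 / Real.log M) * (t / (9 * (X.card:ℝ))) := by
      rw [step]
      apply mul_le_mul_of_nonneg_right hA (by positivity)
    have hsimp : ((X.card:ℝ) * (X.card:ℝ)) * (2 * M * Real.log 10 / Real.log M) * (t / (9 * (X.card:ℝ)))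
        = (2 * Real.log 10 / 9) * ((X.card:ℝ) * M * t / Real.log M) := by
      field_simp
    have hident : (X.card:ℝ) * M * t / Real.log M = π / Δ := by
      rw [ht]
      field_simp
    rw [hsimp, hident] at hmul
    have hlog10 : Real.log 10 ≤ 9 := by
      have := Real.log_le_sub_one_of_pos (show (0:ℝ) < 10 by norm_num)
      linarith
    have hπΔ : (0:ℝ) ≤ π / Δ := by positivity
    nlinarith
  -- combine
  have hcard : (Bad.card : ℝ) = (B1.card : ℝ) + (B2.card : ℝ) := by
    rw [← hsplit]; push_cast; ring
  rw [hcard]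
  have : (0:ℝ) ≤ π / Δ := by positivity
  calc (B1.card : ℝ) + (B2.card : ℝ) ≤ (2/9) * (π / Δ) + 2 * (π / Δ) := by linarith
  _ ≤ 10 * (π / Δ) := by linarith
  _ = 10 * π / Δ := by ring
end

section
/- There exists an absolute constant C > 0 with the following property. For all integers N ≥ 2 and M ≥ 2, every nonempty subset X of {1, 2, …, 10^M}, and every real Δ ≥ 1 satisfying M·|X|·Δ² ≤ π(N)·log M, the number of primes p ≤ N for which the inequality | #{x mod p : x ∈ X} − |X| | ≤ C·|X|/Δ FAILS is at most C·π(N)/Δ. -/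
open Finset

lemma card_le_image_add_pairs (X : Finset ℕ) (f : ℕ → ℕ) :
    X.card ≤ (X.image f).card +
      ((X ×ˢ X).filter (fun q => q.1 < q.2 ∧ f q.1 = f q.2)).card := by
  classical
  set R := X.filter (fun x => ∀ y ∈ X, f y = f x → x ≤ y) with hRdef
  have hRsub : R ⊆ X := filter_subset _ _
  have himg : R.image f = X.image f := by
    apply Finset.Subset.antisymm (image_subset_image hRsub)
    intro z hz
    obtain ⟨x, hx, rfl⟩ := mem_image.mp hz
    have hne : (X.filter (fun y => f y = f x)).Nonempty := ⟨x, mem_filter.mpr ⟨hx, rfl⟩⟩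
    have hmmem := (X.filter (fun y => f y = f x)).min'_mem hne
    rw [mem_filter] at hmmem
    refine mem_image.mpr ⟨_, ?_, hmmem.2⟩
    refine mem_filter.mpr ⟨hmmem.1, ?_⟩
    intro y hy hfy
    exact Finset.min'_le _ y (mem_filter.mpr ⟨hy, by rw [hfy, hmmem.2]⟩)
  have hinj : Set.InjOn f R := by
    intro a ha b hb hab
    rw [mem_coe, mem_filter] at ha hb
    exact le_antisymm (ha.2 b hb.1 hab.symm) (hb.2 a ha.1 hab)
  have hRcard : R.card = (X.image f).card := by
    rw [← himg, card_image_of_injOn hinj]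
  have hsd : (X \ R).card ≤
      ((X ×ˢ X).filter (fun q => q.1 < q.2 ∧ f q.1 = f q.2)).card := by
    apply Finset.card_le_card_of_injOn
      (fun x => ((insert x (X.filter (fun y => f y = f x))).min' (insert_nonempty _ _), x))
    · intro x hx
      rw [mem_coe, mem_sdiff] at hx
      obtain ⟨hxX, hxR⟩ := hx
      have hself : x ∈ X.filter (fun y => f y = f x) := mem_filter.mpr ⟨hxX, rfl⟩
      have hins : insert x (X.filter (fun y => f y = f x)) = X.filter (fun y => f y = f x) :=
        insert_eq_self.mpr hself
      have hmmem := (insert x (X.filter (fun y => f y = f x))).min'_mem (insert_nonempty _ _)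
      have hmm : (insert x (X.filter (fun y => f y = f x))).min' (insert_nonempty _ _) ∈ X ∧
          f ((insert x (X.filter (fun y => f y = f x))).min' (insert_nonempty _ _)) = f x := by
        rcases mem_insert.mp hmmem with h | h
        · rw [h]; exact ⟨hxX, rfl⟩
        · exact ⟨(mem_filter.mp h).1, (mem_filter.mp h).2⟩
      have hxR' : ¬ (∀ y ∈ X, f y = f x → x ≤ y) := by
        intro h
        exact hxR (mem_filter.mpr ⟨hxX, h⟩)
      push_neg at hxR'
      obtain ⟨y, hyX, hfy, hylt⟩ := hxR'
      have hmy : (insert x (X.filter (fun y => f y = f x))).min' (insert_nonempty _ _) ≤ y :=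
        Finset.min'_le (insert x (X.filter (fun y => f y = f x))) y
          (mem_insert_of_mem (mem_filter.mpr ⟨hyX, hfy⟩))
      refine mem_coe.mpr (mem_filter.mpr ⟨mem_product.mpr ⟨hmm.1, hxX⟩, lt_of_le_of_lt hmy hylt, hmm.2⟩)
    · intro a _ b _ hab
      exact (Prod.mk.injEq _ _ _ _ ▸ hab).2
  calc X.card = (X \ R).card + R.card := (Finset.card_sdiff_add_card_eq_card hRsub).symm
    _ ≤ _ := by rw [hRcard]; omega

lemma log_le_sqrt {x : ℝ} (hx : 1 ≤ x) : Real.log x ≤ Real.sqrt x := by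
  have hx0 : (0:ℝ) < x := by linarith
  set t := x ^ (1/4 : ℝ) with ht
  have ht0 : 0 < t := Real.rpow_pos_of_pos hx0 _
  have h1 : Real.log x = 4 * Real.log t := by
    rw [ht, Real.log_rpow hx0]; ring
  have h2 : Real.log t ≤ t - 1 := Real.log_le_sub_one_of_pos ht0
  have h3 : Real.sqrt x = t ^ 2 := by
    rw [ht, ← Real.rpow_natCast (x ^ (1/4:ℝ)) 2, ← Real.rpow_mul hx0.le]
    norm_num
    rw [Real.sqrt_eq_rpow]
  nlinarith [sq_nonneg (t - 2)]

lemma big_bound {s K Δ π m lM l10 : ℝ} (hs : 0 ≤ s) (hK1 : 1 ≤ K) (hΔ1 : 1 ≤ Δ)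
    (hπ : 0 < π) (hm : 0 ≤ m) (hlM : 0 < lM) (h10 : 0 ≤ l10) (h10' : l10 ≤ 9)
    (hcon : m * K * Δ ^ 2 ≤ π * lM)
    (hkey : s * (6 * K / Δ) ≤ K ^ 2 * (2 * m * l10 / lM)) : s ≤ 3 * π / Δ := by
  have hΔ0 : 0 < Δ := by linarith
  have hK0 : 0 < K := by linarith
  rw [le_div_iff₀ hΔ0]
  have h1 : s * (6 * K / Δ) * Δ ≤ K ^ 2 * (2 * m * l10 / lM) * Δ :=
    mul_le_mul_of_nonneg_right hkey hΔ0.le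
  have e1 : s * (6 * K / Δ) * Δ = s * (6 * K) := by field_simp
  rw [e1] at h1
  have h2 : s * (6 * K) * lM ≤ K ^ 2 * (2 * m * l10 / lM) * Δ * lM :=
    mul_le_mul_of_nonneg_right h1 hlM.le
  have e2 : K ^ 2 * (2 * m * l10 / lM) * Δ * lM = 2 * K * l10 * (m * K * Δ) := by
    field_simp
  rw [e2] at h2
  have h3 : s * 6 * K * lM * Δ ≤ 2 * K * l10 * (m * K * Δ ^ 2) := by
    nlinarith [mul_le_mul_of_nonneg_right h2 hΔ0.le]
  have h4 : 2 * K * l10 * (m * K * Δ ^ 2) ≤ 2 * K * l10 * (π * lM) := by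
    apply mul_le_mul_of_nonneg_left hcon
    positivity
  have h5 : 2 * K * l10 * (π * lM) ≤ 18 * K * π * lM := by
    nlinarith [mul_nonneg (mul_nonneg hK0.le hπ.le) hlM.le]
  have h6 : s * Δ * (6 * K * lM) ≤ 3 * π * (6 * K * lM) := by nlinarith
  have hpos : 0 < 6 * K * lM := by positivity
  exact le_of_mul_le_mul_right h6 hpos

set_option maxHeartbeats 1000000 in
/-- **Corollary 1 (asymptotic value set for sparse sets).**
There is an absolute constant `C > 0` such that for all integers `N ≥ 2`, `M ≥ 2`,
every nonempty `X ⊆ {1, …, 10^M}` and every real `Δ ≥ 1` with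
`M·|X|·Δ² ≤ π(N)·log M`, the number of primes `p ≤ N` for which
`| #{x mod p : x ∈ X} − |X| | ≤ C·|X|/Δ` fails is at most `C·π(N)/Δ`. -/
theorem stmt_2 :
    ∃ C : ℝ, 0 < C ∧
      ∀ N M : ℕ, 2 ≤ N → 2 ≤ M →
        ∀ X : Finset ℕ, X ⊆ Finset.Icc 1 (10 ^ M) → X.Nonempty →
          ∀ Δ : ℝ, 1 ≤ Δ →
            (M : ℝ) * (X.card : ℝ) * Δ ^ 2 ≤ (N.primeCounting : ℝ) * Real.log M →
            ({p : ℕ | p ≤ N ∧ p.Prime ∧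
                ¬ (|((X.image (fun x => x % p)).card : ℝ) - (X.card : ℝ)| ≤
                    C * (X.card : ℝ) / Δ)}.ncard : ℝ)
              ≤ C * (N.primeCounting : ℝ) / Δ := by
  classical
  refine ⟨6, by norm_num, ?_⟩
  intro N M hN hM X hXsub hXne Δ hΔ hcon
  set π : ℝ := (N.primeCounting : ℝ) with hπdef
  set K : ℝ := (X.card : ℝ) with hKdef
  have hK1 : (1:ℝ) ≤ K := by
    have h : (1:ℕ) ≤ X.card := hXne.card_pos
    rw [hKdef]
    exact_mod_cast h
  have hM2 : (2:ℝ) ≤ (M:ℝ) := by exact_mod_cast hM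
  have hlogM : 0 < Real.log M := Real.log_pos (by linarith)
  have hΔ0 : 0 < Δ := lt_of_lt_of_le one_pos hΔ
  have hΔne : Δ ≠ 0 := hΔ0.ne'
  have hK0 : K ≠ 0 := by intro h; rw [h] at hK1; linarith
  have hKΔ : (1:ℝ) ≤ K * Δ := by nlinarith
  have hπpos : 0 < π := by
    have ha : (1:ℝ) ≤ (K * Δ) * Δ := by nlinarith
    have hb : (2:ℝ) ≤ (M:ℝ) * ((K * Δ) * Δ) := by nlinarith
    have h2 : (0:ℝ) < π * Real.log M := by nlinarith
    nlinarith
  set T : ℝ := π / Δ with hTdef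
  have hT0 : 0 < T := div_pos hπpos hΔ0
  -- T ≥ M / log M ≥ √M
  have hTge : (M:ℝ) / Real.log M ≤ T := by
    rw [div_le_div_iff₀ hlogM hΔ0]
    have h1 : (M:ℝ) * Δ * 1 ≤ (M:ℝ) * Δ * (K * Δ) := by
      apply mul_le_mul_of_nonneg_left hKΔ
      positivity
    nlinarith
  have hsqrtM : Real.sqrt M ≤ (M:ℝ) / Real.log M := by
    rw [le_div_iff₀ hlogM]
    have h1 : Real.log M ≤ Real.sqrt M := log_le_sqrt (by linarith)
    nlinarith [Real.sq_sqrt (by linarith : (0:ℝ) ≤ (M:ℝ)), Real.sqrt_nonneg (M:ℝ)]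
  have hsqrtT : Real.sqrt M ≤ T := le_trans hsqrtM hTge
  have hT1 : 1 < T := by
    have h1 : (1:ℝ) < Real.sqrt M := by
      rw [show (1:ℝ) = Real.sqrt 1 by simp]
      exact Real.sqrt_lt_sqrt zero_le_one (by linarith)
    linarith
  have hlogT : Real.log M / 2 ≤ Real.log T := by
    have h1 : Real.log (Real.sqrt M) ≤ Real.log T :=
      Real.log_le_log (Real.sqrt_pos.mpr (by linarith)) hsqrtT
    rwa [Real.log_sqrt (by linarith)] at h1
  have hlogT0 : 0 < Real.log T := lt_of_lt_of_le (by linarith) hlogT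
  have hlogM0 : Real.log (M:ℝ) ≠ 0 := hlogM.ne'
  -- the bad set as a finset
  set Q : ℕ → Prop := fun p => p.Prime ∧
      ¬ (|((X.image (fun x => x % p)).card : ℝ) - K| ≤ 6 * K / Δ) with hQdef
  set S : Finset ℕ := (Finset.Iic N).filter Q with hSdef
  have hset : {p : ℕ | p ≤ N ∧ p.Prime ∧
      ¬ (|((X.image (fun x => x % p)).card : ℝ) - K| ≤ 6 * K / Δ)} = ↑S := by
    ext p
    simp [hSdef, hQdef, Finset.mem_filter, Finset.mem_Iic, and_assoc]
  rw [hset, Set.ncard_coe_finset]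
  -- split S
  set Ssm : Finset ℕ := S.filter (fun p => (p:ℝ) ≤ T) with hSsm
  set Sbig : Finset ℕ := S.filter (fun p => ¬ ((p:ℝ) ≤ T)) with hSbig
  have hsplit : Ssm.card + Sbig.card = S.card :=
    Finset.card_filter_add_card_filter_not _
  -- small part
  have hsmall : (Ssm.card : ℝ) ≤ T := by
    have hsub : Ssm ⊆ Finset.Icc 1 ⌊T⌋₊ := by
      intro p hp
      rw [hSsm, Finset.mem_filter] at hp
      obtain ⟨hpS, hpT⟩ := hp
      rw [hSdef, Finset.mem_filter] at hpS
      refine Finset.mem_Icc.mpr ⟨hpS.2.1.one_lt.le, Nat.le_floor hpT⟩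
    calc (Ssm.card : ℝ) ≤ ((Finset.Icc 1 ⌊T⌋₊).card : ℝ) := by
          exact_mod_cast Finset.card_le_card hsub
      _ ≤ (⌊T⌋₊ : ℝ) := by
          rw [Nat.card_Icc]
          push_cast
          norm_num
      _ ≤ T := Nat.floor_le hT0.le
  -- big part
  set B : ℝ := 2 * M * Real.log 10 / Real.log M with hBdef
  have hB0 : 0 ≤ B := by
    have : 0 < Real.log 10 := Real.log_pos (by norm_num)
    positivity
  have hbigkey : (Sbig.card : ℝ) * (6 * K / Δ) ≤ K ^ 2 * B := by
    have hstep1 : (Sbig.card : ℝ) * (6 * K / Δ) ≤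
        ∑ p ∈ Sbig, (K - ((X.image (fun x => x % p)).card : ℝ)) := by
      have hconst : (Sbig.card : ℝ) * (6 * K / Δ) = ∑ _p ∈ Sbig, (6 * K / Δ) := by
        rw [Finset.sum_const, nsmul_eq_mul]
      rw [hconst]
      apply Finset.sum_le_sum
      intro p hp
      rw [hSbig, Finset.mem_filter] at hp
      have hpS := hp.1
      rw [hSdef, Finset.mem_filter] at hpS
      have hbad := hpS.2.2
      have hle : ((X.image (fun x => x % p)).card : ℝ) ≤ K := by
        rw [hKdef]
        exact_mod_cast Finset.card_image_le (s := X) (f := fun x => x % p)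
      rw [abs_of_nonpos (by linarith)] at hbad
      push_neg at hbad
      linarith
    have hstep2 : ∀ p ∈ Sbig, (K - ((X.image (fun x => x % p)).card : ℝ)) ≤
        (((X ×ˢ X).filter (fun q => q.1 < q.2 ∧ q.1 % p = q.2 % p)).card : ℝ) := by
      intro p _
      have := card_le_image_add_pairs X (fun x => x % p)
      have h2 : (X.card : ℝ) ≤ ((X.image (fun x => x % p)).card : ℝ) +
          (((X ×ˢ X).filter (fun q => q.1 < q.2 ∧ q.1 % p = q.2 % p)).card : ℝ) := by
        exact_mod_cast this
      rw [hKdef]; linarith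
    have hstep3 : ∑ p ∈ Sbig,
        ((((X ×ˢ X).filter (fun q => q.1 < q.2 ∧ q.1 % p = q.2 % p)).card : ℝ)) ≤
        K ^ 2 * B := by
      have hswap : ∑ p ∈ Sbig,
          (((X ×ˢ X).filter (fun q => q.1 < q.2 ∧ q.1 % p = q.2 % p)).card) =
          ∑ q ∈ X ×ˢ X, ((Sbig.filter (fun p => q.1 < q.2 ∧ q.1 % p = q.2 % p)).card) := by
        simp_rw [Finset.card_filter]
        exact Finset.sum_comm
      have hinner : ∀ q ∈ X ×ˢ X,
          (((Sbig.filter (fun p => q.1 < q.2 ∧ q.1 % p = q.2 % p)).card : ℝ)) ≤ B := by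
        intro q hq
        by_cases hlt : q.1 < q.2
        · set n : ℕ := q.2 - q.1 with hn
          have hn0 : n ≠ 0 := Nat.sub_ne_zero_of_lt hlt
          have hq2 : q.2 ≤ 10 ^ M := by
            have := hXsub (Finset.mem_product.mp hq).2
            exact (Finset.mem_Icc.mp this).2
          have hnle : (n:ℝ) ≤ (10:ℝ) ^ M := by
            have : n ≤ 10 ^ M := le_trans (Nat.sub_le _ _) hq2
            exact_mod_cast this
          set F : Finset ℕ := n.primeFactors.filter (fun p => ¬ ((p:ℝ) ≤ T)) with hF
          have hsubF : Sbig.filter (fun p => q.1 < q.2 ∧ q.1 % p = q.2 % p) ⊆ F := by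
            intro p hp
            rw [Finset.mem_filter] at hp
            obtain ⟨hpB, _, hmod⟩ := hp
            rw [hSbig, Finset.mem_filter] at hpB
            obtain ⟨hpS, hpT⟩ := hpB
            rw [hSdef, Finset.mem_filter] at hpS
            have hprime : p.Prime := hpS.2.1
            have hdvd : p ∣ n := (Nat.modEq_iff_dvd' hlt.le).mp hmod
            rw [hF, Finset.mem_filter]
            exact ⟨Nat.mem_primeFactors.mpr ⟨hprime, hdvd, hn0⟩, hpT⟩
          have hpow : T ^ F.card ≤ (10:ℝ) ^ M := by
            calc T ^ F.card = ∏ _p ∈ F, T := (Finset.prod_const T).symm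
              _ ≤ ∏ p ∈ F, (p:ℝ) := by
                  apply Finset.prod_le_prod (fun _ _ => hT0.le)
                  intro p hp
                  rw [hF, Finset.mem_filter] at hp
                  exact (not_le.mp hp.2).le
              _ = ((∏ p ∈ F, p : ℕ) : ℝ) := by push_cast; rfl
              _ ≤ (n : ℝ) := by
                  have hdvd : (∏ p ∈ F, p) ∣ n := by
                    refine dvd_trans ?_ (Nat.prod_primeFactors_dvd n)
                    exact Finset.prod_dvd_prod_of_subset _ _ _ (Finset.filter_subset _ _)
                  exact_mod_cast Nat.le_of_dvd (Nat.pos_of_ne_zero hn0) hdvd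
              _ ≤ (10:ℝ) ^ M := hnle
          have hlog : (F.card : ℝ) * Real.log T ≤ (M:ℝ) * Real.log 10 := by
            have h1 : Real.log (T ^ F.card) ≤ Real.log ((10:ℝ) ^ M) :=
              Real.log_le_log (pow_pos hT0 _) hpow
            rwa [Real.log_pow, Real.log_pow] at h1
          have hcard : (F.card : ℝ) ≤ B := by
            rw [hBdef]
            rw [le_div_iff₀ hlogM]
            calc (F.card : ℝ) * Real.log M = 2 * ((F.card : ℝ) * (Real.log M / 2)) := by ring
              _ ≤ 2 * ((F.card : ℝ) * Real.log T) := by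
                  have : (0:ℝ) ≤ (F.card : ℝ) := Nat.cast_nonneg _
                  nlinarith
              _ ≤ 2 * ((M:ℝ) * Real.log 10) := by linarith
              _ = 2 * M * Real.log 10 := by ring
          calc (((Sbig.filter (fun p => q.1 < q.2 ∧ q.1 % p = q.2 % p)).card : ℝ))
              ≤ (F.card : ℝ) := by exact_mod_cast Finset.card_le_card hsubF
            _ ≤ B := hcard
        · have : Sbig.filter (fun p => q.1 < q.2 ∧ q.1 % p = q.2 % p) = ∅ := by
            apply Finset.filter_false_of_mem
            intro p _
            simp [hlt]
          rw [this]
          simpa using hB0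
      calc ∑ p ∈ Sbig,
          ((((X ×ˢ X).filter (fun q => q.1 < q.2 ∧ q.1 % p = q.2 % p)).card : ℝ))
          = ∑ q ∈ X ×ˢ X,
            (((Sbig.filter (fun p => q.1 < q.2 ∧ q.1 % p = q.2 % p)).card : ℝ)) := by
            exact_mod_cast congrArg (Nat.cast : ℕ → ℝ) hswap
        _ ≤ ∑ _q ∈ X ×ˢ X, B := Finset.sum_le_sum hinner
        _ = ((X ×ˢ X).card : ℝ) * B := by rw [Finset.sum_const, nsmul_eq_mul]
        _ = K ^ 2 * B := by
            rw [Finset.card_product, hKdef]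
            push_cast
            ring
    calc (Sbig.card : ℝ) * (6 * K / Δ) ≤
        ∑ p ∈ Sbig, (K - ((X.image (fun x => x % p)).card : ℝ)) := hstep1
      _ ≤ ∑ p ∈ Sbig,
          ((((X ×ˢ X).filter (fun q => q.1 < q.2 ∧ q.1 % p = q.2 % p)).card : ℝ)) :=
          Finset.sum_le_sum hstep2
      _ ≤ K ^ 2 * B := hstep3
  -- conclude big part bound
  have hlog10 : Real.log 10 ≤ 9 := by
    have := Real.log_le_sub_one_of_pos (x := (10:ℝ)) (by norm_num)
    linarith
  have hbig : (Sbig.card : ℝ) ≤ 3 * π / Δ := by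
    rw [hBdef] at hbigkey
    exact big_bound (Nat.cast_nonneg _) hK1 hΔ hπpos (by linarith) hlogM
      (Real.log_nonneg (by norm_num)) hlog10 hcon hbigkey
  -- combine
  have : (S.card : ℝ) = (Ssm.card : ℝ) + (Sbig.card : ℝ) := by
    rw [← hsplit]; push_cast; ring
  rw [this]
  have heq4 : T + 3 * π / Δ = 4 * π / Δ := by rw [hTdef]; ring
  have hfin : (4:ℝ) * π / Δ ≤ 6 * π / Δ := by
    rw [div_le_div_iff₀ hΔ0 hΔ0]
    nlinarith
  linarith
end

section
/- There exists an absolute constant C > 0 with the following property. For all integers N ≥ 2 and M ≥ 2, every nonempty subset X of {1, 2, …, 10^M}, and every real Δ ≥ 1, define for each prime p the quantity J_p = #{(x, y) ∈ X × X : x ≡ y (mod p)}. Then the number of primes p ≤ N for which J_p > |X| + C·|X|²·M·Δ / (π(N)·log M) is at most C·π(N)/Δ; moreover J_p ≥ |X| holds for every prime p. -/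
private lemma diag_le_aux (X : Finset ℕ) (p : ℕ) :
    X.card ≤ ((X ×ˢ X).filter (fun q => q.1 ≡ q.2 [MOD p])).card := by
  classical
  have h : X.card = (X.image (fun x => (x, x))).card :=
    (Finset.card_image_of_injective _ (fun a b h => by simpa using h)).symm
  rw [h]
  apply Finset.card_le_card
  intro q hq
  simp only [Finset.mem_image] at hq
  obtain ⟨x, hx, rfl⟩ := hq
  simp [Finset.mem_filter, Finset.mem_product, hx, Nat.ModEq.refl]

private lemma log_le_two_sqrt {x : ℝ} (hx : 1 ≤ x) :
    Real.log x ≤ 2 * Real.sqrt x := by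
  have h0 : (0:ℝ) < x := lt_of_lt_of_le one_pos hx
  have hs : 0 < Real.sqrt x := Real.sqrt_pos.mpr h0
  have h1 := Real.log_le_sub_one_of_pos hs
  have hls : Real.log (Real.sqrt x) = Real.log x / 2 := Real.log_sqrt h0.le
  nlinarith [Real.sqrt_nonneg x]

private lemma omega_le (M d : ℕ) (hM : 2 ≤ M) (hd1 : 1 ≤ d) (hd2 : d ≤ 10 ^ M) :
    (d.primeFactors.card : ℝ) ≤ 20 * M / Real.log M := by
  classical
  have hM1 : (1:ℝ) < (M:ℝ) := by exact_mod_cast lt_of_lt_of_le one_lt_two hM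
  have hL : 0 < Real.log M := Real.log_pos hM1
  set b := Nat.sqrt M with hb
  set S := d.primeFactors with hS
  have hsplit : (S.filter (fun p => p ≤ b)).card + (S.filter (fun p => ¬ p ≤ b)).card = S.card :=
    Finset.card_filter_add_card_filter_not _
  have hsq : Real.sqrt M * Real.sqrt M = (M:ℝ) := Real.mul_self_sqrt (by positivity)
  have hsmall : ((S.filter (fun p => p ≤ b)).card : ℝ) ≤ 2 * M / Real.log M := by
    have hsub : S.filter (fun p => p ≤ b) ⊆ Finset.Icc 2 b := by
      intro p hp
      simp only [Finset.mem_filter] at hp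
      exact Finset.mem_Icc.mpr ⟨(Nat.prime_of_mem_primeFactors hp.1).two_le, hp.2⟩
    have h1 : (S.filter (fun p => p ≤ b)).card ≤ b := by
      have := Finset.card_le_card hsub
      rw [Nat.card_Icc] at this
      omega
    have h2 : (b:ℝ) ≤ Real.sqrt M := Real.nat_sqrt_le_real_sqrt
    have h3 : Real.log M ≤ 2 * Real.sqrt M := log_le_two_sqrt hM1.le
    rw [le_div_iff₀ hL]
    have h4 : ((S.filter (fun p => p ≤ b)).card : ℝ) ≤ Real.sqrt M := le_trans (by exact_mod_cast h1) h2
    nlinarith [Real.sqrt_nonneg (M:ℝ), Nat.cast_nonneg (α := ℝ) (S.filter (fun p => p ≤ b)).card]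
  have hlarge : ((S.filter (fun p => ¬ p ≤ b)).card : ℝ) ≤ 18 * M / Real.log M := by
    set k := (S.filter (fun p => ¬ p ≤ b)).card with hk
    have hprod_dvd : ∏ p ∈ S.filter (fun p => ¬ p ≤ b), p ∣ d :=
      (Finset.prod_dvd_prod_of_subset _ _ _ (Finset.filter_subset _ _)).trans
        (Nat.prod_primeFactors_dvd d)
    have hpow : (b+1) ^ k ≤ ∏ p ∈ S.filter (fun p => ¬ p ≤ b), p :=
      Finset.pow_card_le_prod _ _ _ (fun p hp => by
        simp only [Finset.mem_filter] at hp; omega)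
    have hd : (b+1)^k ≤ 10 ^ M := (hpow.trans (Nat.le_of_dvd hd1 hprod_dvd)).trans hd2
    have hR : ((b:ℝ)+1)^k ≤ (10:ℝ)^M := by exact_mod_cast hd
    have hsqlt : Real.sqrt M ≤ (b:ℝ)+1 := by
      have h5 : (M:ℝ) ≤ ((b:ℝ)+1) * ((b:ℝ)+1) := by
        have := Nat.lt_succ_sqrt M
        exact_mod_cast Nat.le_of_lt (by simpa [Nat.succ_eq_add_one] using this)
      nlinarith [Real.sqrt_nonneg (M:ℝ), Real.sq_sqrt (show (0:ℝ) ≤ M by positivity)]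
    have hblog : Real.log M / 2 ≤ Real.log ((b:ℝ)+1) := by
      rw [← Real.log_sqrt (by positivity)]
      exact Real.log_le_log (Real.sqrt_pos.mpr (by positivity)) hsqlt
    have hlog : (k:ℝ) * Real.log ((b:ℝ)+1) ≤ (M:ℝ) * Real.log 10 := by
      have := Real.log_le_log (by positivity : (0:ℝ) < ((b:ℝ)+1)^k) hR
      rwa [Real.log_pow, Real.log_pow] at this
    have hlog10 : Real.log 10 ≤ 9 := by
      have := Real.log_le_sub_one_of_pos (show (0:ℝ) < 10 by norm_num)
      linarith
    rw [le_div_iff₀ hL]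
    have hk0 : (0:ℝ) ≤ (k:ℝ) := by positivity
    nlinarith
  have := hsplit
  have hcast : ((S.filter (fun p => p ≤ b)).card : ℝ) + ((S.filter (fun p => ¬ p ≤ b)).card : ℝ) = (S.card : ℝ) := by
    exact_mod_cast this
  rw [← hcast]
  have : (20:ℝ) * M / Real.log M = 2 * M / Real.log M + 18 * M / Real.log M := by ring
  rw [this]
  exact add_le_add hsmall hlarge

private lemma per_pair (M N : ℕ) (hM : 2 ≤ M) (x y : ℕ)
    (hx1 : 1 ≤ x) (hx2 : x ≤ 10 ^ M) (hy1 : 1 ≤ y) (hy2 : y ≤ 10 ^ M) :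
    (((((Finset.range (N+1)).filter Nat.Prime)).filter
        (fun p => x ≠ y ∧ x ≡ y [MOD p])).card : ℝ) ≤ 20 * M / Real.log M := by
  classical
  have hM1 : (1:ℝ) < (M:ℝ) := by exact_mod_cast lt_of_lt_of_le one_lt_two hM
  have hL : 0 < Real.log M := Real.log_pos hM1
  by_cases hxy : x = y
  · have : (((Finset.range (N+1)).filter Nat.Prime)).filter
        (fun p => x ≠ y ∧ x ≡ y [MOD p]) = ∅ := by
      apply Finset.filter_false_of_mem
      intro p _ h
      exact h.1 hxy
    rw [this]
    simp only [Finset.card_empty, Nat.cast_zero]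
    positivity
  · set d := ((y:ℤ) - (x:ℤ)).natAbs with hd
    have hd1 : 1 ≤ d := by omega
    have hd2 : d ≤ 10 ^ M := by
      have h10 : (1:ℕ) ≤ 10 ^ M := Nat.one_le_pow _ _ (by norm_num)
      omega
    have hsub : (((Finset.range (N+1)).filter Nat.Prime)).filter
        (fun p => x ≠ y ∧ x ≡ y [MOD p]) ⊆ d.primeFactors := by
      intro p hp
      simp only [Finset.mem_filter, Finset.mem_range] at hp
      obtain ⟨⟨-, hprime⟩, -, hmod⟩ := hp
      have hdvd : (p:ℤ) ∣ (y:ℤ) - (x:ℤ) := (Nat.modEq_iff_dvd).mp hmod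
      have : p ∣ d := by
        rw [hd]
        have := Int.natAbs_dvd_natAbs.mpr hdvd
        simpa using this
      exact Nat.mem_primeFactors.mpr ⟨hprime, this, by omega⟩
    calc (((((Finset.range (N+1)).filter Nat.Prime)).filter
        (fun p => x ≠ y ∧ x ≡ y [MOD p])).card : ℝ)
        ≤ (d.primeFactors.card : ℝ) := by exact_mod_cast Finset.card_le_card hsub
      _ ≤ 20 * M / Real.log M := omega_le M d hM hd1 hd2

/-- **Lemma (asymptotics for `J_p`).**
There is an absolute constant `C > 0` such that for all integers `N ≥ 2`, `M ≥ 2`,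
every nonempty `X ⊆ {1, …, 10^M}` and every real `Δ ≥ 1`: writing
`J_p = #{(x,y) ∈ X × X : x ≡ y (mod p)}`, the number of primes `p ≤ N` with
`J_p > |X| + C·|X|²·M·Δ / (π(N)·log M)` is at most `C·π(N)/Δ`; moreover
`J_p ≥ |X|` for every prime `p`. -/
theorem stmt_3 :
    ∃ C : ℝ, 0 < C ∧
      ∀ N M : ℕ, 2 ≤ N → 2 ≤ M →
        ∀ X : Finset ℕ, X ⊆ Finset.Icc 1 (10 ^ M) → X.Nonempty →
          ∀ Δ : ℝ, 1 ≤ Δ →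
            (({p : ℕ | p ≤ N ∧ p.Prime ∧
                ((X.card : ℝ) + C * (X.card : ℝ) ^ 2 * (M : ℝ) * Δ /
                    ((N.primeCounting : ℝ) * Real.log M) <
                  (((X ×ˢ X).filter (fun q => q.1 ≡ q.2 [MOD p])).card : ℝ))}.ncard : ℝ)
              ≤ C * (N.primeCounting : ℝ) / Δ) ∧
            (∀ p : ℕ, p.Prime →
              X.card ≤ ((X ×ˢ X).filter (fun q => q.1 ≡ q.2 [MOD p])).card) := by
  classical
  refine ⟨40, by norm_num, ?_⟩
  intro N M hN hM X hX hXne Δ hΔ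
  refine ⟨?_, fun p _ => diag_le_aux X p⟩
  have hM1 : (1:ℝ) < (M:ℝ) := by exact_mod_cast lt_of_lt_of_le one_lt_two hM
  have hL : 0 < Real.log M := Real.log_pos hM1
  have hΔ0 : (0:ℝ) < Δ := lt_of_lt_of_le one_pos hΔ
  have hXc : 0 < X.card := Finset.card_pos.mpr hXne
  have hXcR : (1:ℝ) ≤ (X.card : ℝ) := by exact_mod_cast hXc
  have hπ1 : 1 ≤ N.primeCounting := by
    calc 1 = Nat.primeCounting 2 := by decide
      _ ≤ N.primeCounting := Nat.monotone_primeCounting hN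
  have hπR : (1:ℝ) ≤ (N.primeCounting : ℝ) := by exact_mod_cast hπ1
  have hπ0 : (0:ℝ) < (N.primeCounting : ℝ) := lt_of_lt_of_le one_pos hπR
  set π : ℝ := (N.primeCounting : ℝ) with hπdef
  set L : ℝ := Real.log M with hLdef
  set T : ℝ := 40 * (X.card : ℝ) ^ 2 * (M : ℝ) * Δ / (π * L) with hTdef
  have hT : 0 < T := by
    rw [hTdef]
    have hM0 : (0:ℝ) < (M:ℝ) := by linarith
    positivity
  set P := (Finset.range (N+1)).filter Nat.Prime with hPdef
  set f : ℕ → ℕ := fun p => ((X ×ˢ X).filter (fun q => q.1 ≡ q.2 [MOD p])).card with hfdef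
  set A := P.filter (fun p => (X.card : ℝ) + T < (f p : ℝ)) with hAdef
  have hset : {p : ℕ | p ≤ N ∧ p.Prime ∧
      ((X.card : ℝ) + 40 * (X.card : ℝ) ^ 2 * (M : ℝ) * Δ / (π * L) <
        (((X ×ˢ X).filter (fun q => q.1 ≡ q.2 [MOD p])).card : ℝ))} = ↑A := by
    ext p
    simp only [hAdef, hPdef, Finset.coe_filter, Finset.mem_filter, Finset.mem_range,
      Set.mem_setOf_eq, Nat.lt_succ_iff, hfdef, hTdef]
    tauto
  rw [hset, Set.ncard_coe_finset]
  -- the off-diagonal count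
  set g : ℕ → ℕ := fun p => ((X ×ˢ X).filter (fun q => q.1 ≠ q.2 ∧ q.1 ≡ q.2 [MOD p])).card
    with hgdef
  have hfg : ∀ p, (f p : ℝ) - (X.card : ℝ) ≤ (g p : ℝ) := by
    intro p
    have hsubset : (X ×ˢ X).filter (fun q => q.1 ≡ q.2 [MOD p]) ⊆
        ((X ×ˢ X).filter (fun q => q.1 = q.2)) ∪
          ((X ×ˢ X).filter (fun q => q.1 ≠ q.2 ∧ q.1 ≡ q.2 [MOD p])) := by
      intro q hq
      simp only [Finset.mem_filter, Finset.mem_union] at hq ⊢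
      by_cases h : q.1 = q.2
      · exact Or.inl ⟨hq.1, h⟩
      · exact Or.inr ⟨hq.1, h, hq.2⟩
    have hdiagcard : ((X ×ˢ X).filter (fun q => q.1 = q.2)).card ≤ X.card := by
      apply Finset.card_le_card_of_injOn (fun q => q.1)
      · intro q hq
        simp only [Finset.mem_coe, Finset.mem_filter, Finset.mem_product] at hq ⊢
        exact hq.1.1
      · intro q hq q' hq' h
        simp only [Finset.coe_filter, Set.mem_setOf_eq, Finset.mem_product] at hq hq'
        exact Prod.ext h (by rw [← hq.2, ← hq'.2]; exact h)
    have := (Finset.card_le_card hsubset).trans (Finset.card_union_le _ _)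
    have hnat : f p ≤ X.card + g p := by
      calc f p ≤ ((X ×ˢ X).filter (fun q => q.1 = q.2)).card + g p := this
        _ ≤ X.card + g p := by omega
    have : (f p : ℝ) ≤ (X.card : ℝ) + (g p : ℝ) := by exact_mod_cast hnat
    linarith
  have hgsum : ∑ p ∈ P, (g p : ℝ) ≤ (X.card : ℝ) ^ 2 * (20 * M / L) := by
    have hswap : ∑ p ∈ P, g p =
        ∑ q ∈ X ×ˢ X, (P.filter (fun p => q.1 ≠ q.2 ∧ q.1 ≡ q.2 [MOD p])).card := by
      simp only [hgdef, Finset.card_filter]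
      exact Finset.sum_comm
    have hper : ∀ q ∈ X ×ˢ X,
        ((P.filter (fun p => q.1 ≠ q.2 ∧ q.1 ≡ q.2 [MOD p])).card : ℝ) ≤ 20 * M / L := by
      intro q hq
      rw [Finset.mem_product] at hq
      have hq1 := Finset.mem_Icc.mp (hX hq.1)
      have hq2 := Finset.mem_Icc.mp (hX hq.2)
      exact per_pair M N hM q.1 q.2 hq1.1 hq1.2 hq2.1 hq2.2
    calc ∑ p ∈ P, (g p : ℝ) = ∑ q ∈ X ×ˢ X,
          ((P.filter (fun p => q.1 ≠ q.2 ∧ q.1 ≡ q.2 [MOD p])).card : ℝ) := by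
          exact_mod_cast congrArg (Nat.cast : ℕ → ℝ) hswap
      _ ≤ (X ×ˢ X).card • (20 * M / L) := Finset.sum_le_card_nsmul _ _ _ hper
      _ = (X.card : ℝ) ^ 2 * (20 * M / L) := by
          rw [Finset.card_product, nsmul_eq_mul]
          push_cast
          ring
  have hmarkov : (A.card : ℝ) * T ≤ (X.card : ℝ) ^ 2 * (20 * M / L) := by
    calc (A.card : ℝ) * T = ∑ _p ∈ A, T := by rw [Finset.sum_const, nsmul_eq_mul]
      _ ≤ ∑ p ∈ A, ((f p : ℝ) - (X.card : ℝ)) := by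
          apply Finset.sum_le_sum
          intro p hp
          rw [hAdef, Finset.mem_filter] at hp
          linarith [hp.2]
      _ ≤ ∑ p ∈ P, ((f p : ℝ) - (X.card : ℝ)) := by
          apply Finset.sum_le_sum_of_subset_of_nonneg (Finset.filter_subset _ _)
          intro p hp _
          have := diag_le_aux X p
          have : (X.card : ℝ) ≤ (f p : ℝ) := by exact_mod_cast this
          linarith
      _ ≤ ∑ p ∈ P, (g p : ℝ) := Finset.sum_le_sum (fun p _ => hfg p)
      _ ≤ (X.card : ℝ) ^ 2 * (20 * M / L) := hgsum
  have hkey : (X.card : ℝ) ^ 2 * (20 * M / L) ≤ (40 * π / Δ) * T := by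
    have heq : (40 * π / Δ) * T = 1600 * (X.card : ℝ) ^ 2 * M / L := by
      rw [hTdef]
      field_simp
      ring
    rw [heq]
    have hfrac : (0:ℝ) ≤ (X.card : ℝ) ^ 2 * M / L := by positivity
    have : (X.card : ℝ) ^ 2 * (20 * M / L) = 20 * ((X.card : ℝ) ^ 2 * M / L) := by ring
    rw [this]
    have : (1600:ℝ) * (X.card : ℝ) ^ 2 * M / L = 1600 * ((X.card : ℝ) ^ 2 * M / L) := by ring
    rw [this]
    nlinarith
  have : (A.card : ℝ) * T ≤ (40 * π / Δ) * T := le_trans hmarkov hkey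
  exact le_of_mul_le_mul_right this hT
end

section
/- Let p be a prime, let X, Y, Z be subsets of {0, 1, …, p−1}, and let λ be an integer. Let T denote the number of quadruples (x, y, z₁, z₂) with x ∈ X, y ∈ Y, z₁, z₂ ∈ Z and x·y + z₁ + z₂ ≡ λ (mod p). Then |T − |X|·|Y|·|Z|²/p| ≤ √(p·|X|·|Y|)·|Z|. In particular, if |X|·|Y|·|Z|² > p³ then T > 0, i.e., the congruence x·y + z₁ + z₂ ≡ λ (mod p) has a solution with x ∈ X, y ∈ Y, z₁, z₂ ∈ Z. -/
open Finset

private lemma stmt5_sum {p : ℕ} [NeZero p] (b : ZMod p) :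
    ∑ t : ZMod p, ZMod.stdAddChar (t * b) = if b = 0 then (p : ℂ) else 0 := by
  classical
  rw [AddChar.sum_mulShift b (ZMod.isPrimitive_stdAddChar p)]
  simp [ZMod.card, apply_ite (Nat.cast : ℕ → ℂ)]

private lemma stmt5_norm {p : ℕ} [NeZero p] (t : ZMod p) : ‖ZMod.stdAddChar t‖ = 1 := by
  rw [ZMod.stdAddChar_apply]; exact Circle.norm_coe _

private lemma stmt5_conj {p : ℕ} [NeZero p] (t : ZMod p) :
    (starRingEnd ℂ) (ZMod.stdAddChar t) = ZMod.stdAddChar (-t) := by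
  have h1 : ‖ZMod.stdAddChar t‖ = 1 := stmt5_norm t
  have hz : ZMod.stdAddChar t ≠ 0 := by
    intro h; rw [h] at h1; simp at h1
  have h2 : ZMod.stdAddChar t * ZMod.stdAddChar (-t) = 1 := by
    rw [← AddChar.map_add_eq_mul, add_neg_cancel, AddChar.map_zero_eq_one]
  apply mul_left_cancel₀ hz
  rw [h2, Complex.mul_conj', h1]; norm_num

private lemma stmt5_injOn {p : ℕ} [NeZero p] {W : Finset ℕ} (hW : W ⊆ Finset.range p) :
    Set.InjOn (fun n : ℕ => (n : ZMod p)) W := by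
  intro a ha b hb h
  have ha' := Finset.mem_range.mp (hW ha)
  have hb' := Finset.mem_range.mp (hW hb)
  have := congrArg ZMod.val h
  rwa [ZMod.val_cast_of_lt ha', ZMod.val_cast_of_lt hb'] at this

private lemma stmt5_complete {p : ℕ} [NeZero p] {W : Finset ℕ} (hW : W ⊆ Finset.range p)
    (f : ZMod p → ℝ) (hf : ∀ u, 0 ≤ f u) :
    ∑ w ∈ W, f (w : ZMod p) ≤ ∑ u : ZMod p, f u := by
  rw [← Finset.sum_image (fun a ha b hb h => stmt5_injOn hW ha hb h)]
  exact Finset.sum_le_sum_of_subset_of_nonneg (Finset.subset_univ _) (fun i _ _ => hf i)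

private lemma stmt5_moment {p : ℕ} [Fact p.Prime] [NeZero p] (c : ZMod p) (hc : c ≠ 0)
    (W : Finset ℕ) (hW : W ⊆ Finset.range p) :
    ∑ u : ZMod p, ‖∑ w ∈ W, ZMod.stdAddChar (u * (c * (w : ZMod p)))‖ ^ 2
      = (p : ℝ) * W.card := by
  classical
  have key : ((∑ u : ZMod p, ‖∑ w ∈ W, ZMod.stdAddChar (u * (c * (w : ZMod p)))‖ ^ 2 : ℝ) : ℂ)
      = ((p : ℝ) * W.card : ℝ) := by
    push_cast
    calc ∑ u : ZMod p, ((‖∑ w ∈ W, ZMod.stdAddChar (u * (c * (w : ZMod p)))‖ : ℂ)) ^ 2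
        = ∑ u : ZMod p, (∑ w ∈ W, ZMod.stdAddChar (u * (c * (w : ZMod p))))
            * (starRingEnd ℂ) (∑ w ∈ W, ZMod.stdAddChar (u * (c * (w : ZMod p)))) := by
          refine Finset.sum_congr rfl fun u _ => ?_
          rw [Complex.mul_conj']
      _ = ∑ u : ZMod p, ∑ w ∈ W, ∑ w' ∈ W,
            ZMod.stdAddChar (u * (c * ((w : ZMod p) - (w' : ZMod p)))) := by
          refine Finset.sum_congr rfl fun u _ => ?_
          rw [map_sum, Finset.sum_mul_sum]
          refine Finset.sum_congr rfl fun w _ => Finset.sum_congr rfl fun w' _ => ?_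
          rw [stmt5_conj, ← AddChar.map_add_eq_mul]
          ring_nf
      _ = ∑ w ∈ W, ∑ w' ∈ W, ∑ u : ZMod p,
            ZMod.stdAddChar (u * (c * ((w : ZMod p) - (w' : ZMod p)))) := by
          rw [Finset.sum_comm]
          exact Finset.sum_congr rfl fun w _ => Finset.sum_comm
      _ = ∑ w ∈ W, ∑ w' ∈ W, if (w' : ZMod p) = (w : ZMod p) then (p : ℂ) else 0 := by
          refine Finset.sum_congr rfl fun w _ => Finset.sum_congr rfl fun w' _ => ?_
          rw [stmt5_sum]
          congr 1
          rw [mul_eq_zero, sub_eq_zero]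
          simp [hc, eq_comm]
      _ = ∑ w ∈ W, (p : ℂ) := by
          refine Finset.sum_congr rfl fun w hw => ?_
          have : ∀ w' ∈ W, (if (w' : ZMod p) = (w : ZMod p) then (p : ℂ) else 0)
              = (if w' = w then (p : ℂ) else 0) := fun w' hw' => by
            refine if_congr ⟨fun h => stmt5_injOn hW hw' hw h, fun h => by rw [h]⟩ rfl rfl
          rw [Finset.sum_congr rfl this, Finset.sum_ite_eq' W w (fun _ => (p : ℂ))]
          simp [hw]
      _ = (p : ℂ) * W.card := by rw [Finset.sum_const]; ring
  exact_mod_cast key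

set_option maxHeartbeats 1000000 in
/-- **Lemma (ternary congruence `x·y + z₁ + z₂ ≡ λ`).**
For a prime `p`, subsets `X, Y, Z ⊆ {0, …, p−1}` and an integer `λ`, the number `T`
of quadruples `(x, y, z₁, z₂) ∈ X × Y × Z × Z` with `x·y + z₁ + z₂ ≡ λ (mod p)`
satisfies `|T − |X|·|Y|·|Z|²/p| ≤ √(p·|X|·|Y|)·|Z|`; in particular, if
`|X|·|Y|·|Z|² > p³` then `T > 0`. -/
theorem stmt_5 (p : ℕ) (hp : p.Prime) (X Y Z : Finset ℕ)
    (hX : X ⊆ Finset.range p) (hY : Y ⊆ Finset.range p) (hZ : Z ⊆ Finset.range p)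
    (lam : ℤ) :
    abs (((((X ×ˢ Y ×ˢ Z ×ˢ Z).filter
          (fun q => ((q.1 * q.2.1 + q.2.2.1 + q.2.2.2 : ℕ) : ℤ) ≡ lam [ZMOD p])).card : ℝ)
        - (X.card : ℝ) * (Y.card : ℝ) * (Z.card : ℝ) ^ 2 / p))
      ≤ Real.sqrt ((p : ℝ) * (X.card : ℝ) * (Y.card : ℝ)) * (Z.card : ℝ) ∧
    ((p : ℝ) ^ 3 < (X.card : ℝ) * (Y.card : ℝ) * (Z.card : ℝ) ^ 2 →
      0 < ((X ×ˢ Y ×ˢ Z ×ˢ Z).filter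
          (fun q => ((q.1 * q.2.1 + q.2.2.1 + q.2.2.2 : ℕ) : ℤ) ≡ lam [ZMOD p])).card) := by
  haveI : Fact p.Prime := ⟨hp⟩
  haveI : NeZero p := ⟨hp.pos.ne'⟩
  set ψ : AddChar (ZMod p) ℂ := ZMod.stdAddChar with hψ
  set l : ZMod p := ((lam : ℤ) : ZMod p) with hl
  set S := (X ×ˢ Y ×ˢ Z ×ˢ Z).filter
      (fun q => ((q.1 * q.2.1 + q.2.2.1 + q.2.2.2 : ℕ) : ℤ) ≡ lam [ZMOD p]) with hS
  set A : ZMod p → ℂ := fun t => ∑ x ∈ X, ∑ y ∈ Y, ψ (t * ((x : ZMod p) * (y : ZMod p)))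
    with hA
  set B : ZMod p → ℂ := fun t => ∑ z ∈ Z, ψ (t * (z : ZMod p)) with hB
  have hcond : ∀ q : ℕ × ℕ × ℕ × ℕ,
      (((q.1 * q.2.1 + q.2.2.1 + q.2.2.2 : ℕ) : ℤ) ≡ lam [ZMOD p])
      ↔ (((q.1 : ZMod p) * q.2.1 + q.2.2.1 + q.2.2.2) - l = 0) := by
    intro q
    have hcast : ((((q.1 * q.2.1 + q.2.2.1 + q.2.2.2 : ℕ) : ℤ)) : ZMod p)
        = (q.1 : ZMod p) * q.2.1 + q.2.2.1 + q.2.2.2 := by push_cast; ring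
    rw [← ZMod.intCast_eq_intCast_iff, hcast, sub_eq_zero, hl]
  -- main identity
  have hQ : (S.card : ℂ) * p
      = ∑ t : ZMod p, (A t * (B t * (B t * ψ (-(t * l))))) := by
    simp only [hA, hB]
    have hsummand : ∀ (t a b c d : ZMod p), ψ (t * ((a * b + c + d) - l))
        = ψ (t * (a * b)) * (ψ (t * c) * (ψ (t * d) * ψ (-(t * l)))) := by
      intro t a b c d
      rw [← AddChar.map_add_eq_mul, ← AddChar.map_add_eq_mul, ← AddChar.map_add_eq_mul]
      congr 1; ring
    calc (S.card : ℂ) * p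
        = ∑ q ∈ X ×ˢ Y ×ˢ Z ×ˢ Z,
            (if ((q.1 * q.2.1 + q.2.2.1 + q.2.2.2 : ℕ) : ℤ) ≡ lam [ZMOD p]
              then (p : ℂ) else 0) := by
          rw [Finset.sum_ite, Finset.sum_const, Finset.sum_const_zero, add_zero,
            nsmul_eq_mul, hS]
      _ = ∑ q ∈ X ×ˢ Y ×ˢ Z ×ˢ Z, ∑ t : ZMod p,
            ψ (t * (((q.1 : ZMod p) * q.2.1 + q.2.2.1 + q.2.2.2) - l)) := by
          refine Finset.sum_congr rfl fun q hq => ?_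
          rw [hψ, stmt5_sum (((q.1 : ZMod p) * (q.2.1 : ZMod p) + (q.2.2.1 : ZMod p) + (q.2.2.2 : ZMod p)) - l)]
          exact if_congr (hcond q) rfl rfl
      _ = ∑ t : ZMod p, ∑ q ∈ X ×ˢ Y ×ˢ Z ×ˢ Z,
            ψ (t * (((q.1 : ZMod p) * q.2.1 + q.2.2.1 + q.2.2.2) - l)) := Finset.sum_comm
      _ = _ := by
          refine Finset.sum_congr rfl fun t _ => ?_
          have hfact : (∑ z ∈ Z, ψ (t * (z : ZMod p)))
                * ((∑ z ∈ Z, ψ (t * (z : ZMod p))) * ψ (-(t * l)))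
              = ∑ z1 ∈ Z, ∑ z2 ∈ Z,
                  ψ (t * (z1 : ZMod p)) * (ψ (t * (z2 : ZMod p)) * ψ (-(t * l))) := by
            rw [Finset.sum_mul]
            refine Finset.sum_congr rfl fun z1 _ => ?_
            rw [Finset.sum_mul, Finset.mul_sum]
          simp only [Finset.sum_product, hsummand]
          rw [Finset.sum_mul]
          refine Finset.sum_congr rfl fun x _ => ?_
          rw [Finset.sum_mul]
          refine Finset.sum_congr rfl fun y _ => ?_
          rw [hfact, Finset.mul_sum]
          refine Finset.sum_congr rfl fun z1 _ => ?_
          rw [Finset.mul_sum]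
  -- value at t = 0
  have hF0 : A 0 * (B 0 * (B 0 * ψ (-(0 * l))))
      = (X.card : ℂ) * Y.card * (Z.card : ℂ) ^ 2 := by
    simp only [hA, hB, zero_mul, neg_zero, AddChar.map_zero_eq_one, Finset.sum_const,
      nsmul_eq_mul, mul_one]
    ring
  have hsplit : (S.card : ℂ) * p - ((X.card : ℂ) * Y.card * (Z.card : ℂ) ^ 2)
      = ∑ t ∈ Finset.univ.erase (0 : ZMod p), (A t * (B t * (B t * ψ (-(t * l))))) := by
    rw [hQ, ← Finset.add_sum_erase Finset.univ _ (Finset.mem_univ (0 : ZMod p)), hF0]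
    ring
  set s := Real.sqrt ((p : ℝ) * (X.card : ℝ) * (Y.card : ℝ)) with hs
  have hAbound : ∀ t : ZMod p, t ≠ 0 → ‖A t‖ ≤ s := by
    intro t ht
    have h1 : ‖A t‖ ≤ ∑ x ∈ X, ‖∑ y ∈ Y, ψ (t * ((x : ZMod p) * (y : ZMod p)))‖ := by
      rw [hA]; exact norm_sum_le _ _
    have h2 := sq_sum_le_card_mul_sum_sq
      (s := X) (f := fun x : ℕ => ‖∑ y ∈ Y, ψ (t * ((x : ZMod p) * (y : ZMod p)))‖)
    have h3 : ∑ x ∈ X, ‖∑ y ∈ Y, ψ (t * ((x : ZMod p) * (y : ZMod p)))‖ ^ 2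
        ≤ (p : ℝ) * Y.card := by
      calc ∑ x ∈ X, ‖∑ y ∈ Y, ψ (t * ((x : ZMod p) * (y : ZMod p)))‖ ^ 2
          = ∑ x ∈ X, (fun u : ZMod p => ‖∑ y ∈ Y, ψ (u * (t * (y : ZMod p)))‖ ^ 2)
              ((x : ℕ) : ZMod p) := by
            refine Finset.sum_congr rfl fun x _ => ?_
            simp only
            congr 2
            refine Finset.sum_congr rfl fun y _ => ?_
            congr 1
            ring
        _ ≤ ∑ u : ZMod p, ‖∑ y ∈ Y, ψ (u * (t * (y : ZMod p)))‖ ^ 2 :=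
            stmt5_complete hX (fun u : ZMod p => ‖∑ y ∈ Y, ψ (u * (t * (y : ZMod p)))‖ ^ 2)
              (fun u => by positivity)
        _ = (p : ℝ) * Y.card := by rw [hψ]; exact stmt5_moment t ht Y hY
    have h4 : ‖A t‖ ^ 2 ≤ (p : ℝ) * X.card * Y.card := by
      calc ‖A t‖ ^ 2
          ≤ (∑ x ∈ X, ‖∑ y ∈ Y, ψ (t * ((x : ZMod p) * (y : ZMod p)))‖) ^ 2 :=
            pow_le_pow_left₀ (norm_nonneg _) h1 2
        _ ≤ (X.card : ℝ) * ∑ x ∈ X, ‖∑ y ∈ Y, ψ (t * ((x : ZMod p) * (y : ZMod p)))‖ ^ 2 := h2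
        _ ≤ (X.card : ℝ) * ((p : ℝ) * Y.card) :=
            mul_le_mul_of_nonneg_left h3 (Nat.cast_nonneg _)
        _ = (p : ℝ) * X.card * Y.card := by ring
    have h5 := Real.sqrt_le_sqrt h4
    rwa [Real.sqrt_sq (norm_nonneg _)] at h5
  have hBsum : ∑ t : ZMod p, ‖B t‖ ^ 2 = (p : ℝ) * Z.card := by
    have h := stmt5_moment (p := p) 1 one_ne_zero Z hZ
    simp only [one_mul] at h
    simp only [hB, hψ]
    exact h
  have hkey : ‖(S.card : ℂ) * p - ((X.card : ℂ) * Y.card * (Z.card : ℂ) ^ 2)‖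
      ≤ s * ((p : ℝ) * Z.card) := by
    rw [hsplit]
    calc ‖∑ t ∈ Finset.univ.erase (0 : ZMod p), (A t * (B t * (B t * ψ (-(t * l)))))‖
        ≤ ∑ t ∈ Finset.univ.erase (0 : ZMod p), ‖A t * (B t * (B t * ψ (-(t * l))))‖ :=
          norm_sum_le _ _
      _ ≤ ∑ t ∈ Finset.univ.erase (0 : ZMod p), s * ‖B t‖ ^ 2 := by
          refine Finset.sum_le_sum fun t htmem => ?_
          have ht : t ≠ 0 := Finset.ne_of_mem_erase htmem
          have hnorm : ‖A t * (B t * (B t * ψ (-(t * l))))‖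
              = ‖A t‖ * (‖B t‖ * (‖B t‖ * 1)) := by
            rw [norm_mul, norm_mul, norm_mul, hψ, stmt5_norm]
          rw [hnorm]
          calc ‖A t‖ * (‖B t‖ * (‖B t‖ * 1)) = ‖A t‖ * ‖B t‖ ^ 2 := by ring
            _ ≤ s * ‖B t‖ ^ 2 :=
              mul_le_mul_of_nonneg_right (hAbound t ht) (by positivity)
      _ = s * ∑ t ∈ Finset.univ.erase (0 : ZMod p), ‖B t‖ ^ 2 := by rw [Finset.mul_sum]
      _ ≤ s * ∑ t : ZMod p, ‖B t‖ ^ 2 := by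
          refine mul_le_mul_of_nonneg_left ?_ (Real.sqrt_nonneg _)
          exact Finset.sum_le_sum_of_subset_of_nonneg (Finset.erase_subset _ _)
            (fun i _ _ => by positivity)
      _ = s * ((p : ℝ) * Z.card) := by rw [hBsum]
  have hp0 : (0 : ℝ) < p := by exact_mod_cast hp.pos
  have hreal : |(S.card : ℝ) * p - (X.card : ℝ) * Y.card * (Z.card : ℝ) ^ 2|
      ≤ s * ((p : ℝ) * Z.card) := by
    have hc : (((S.card : ℝ) * p - (X.card : ℝ) * Y.card * (Z.card : ℝ) ^ 2 : ℝ) : ℂ)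
        = (S.card : ℂ) * p - ((X.card : ℂ) * Y.card * (Z.card : ℂ) ^ 2) := by
      push_cast; ring
    calc |(S.card : ℝ) * p - (X.card : ℝ) * Y.card * (Z.card : ℝ) ^ 2|
        = ‖(((S.card : ℝ) * p - (X.card : ℝ) * Y.card * (Z.card : ℝ) ^ 2 : ℝ) : ℂ)‖ :=
          (Complex.norm_real _).symm
      _ = ‖(S.card : ℂ) * p - ((X.card : ℂ) * Y.card * (Z.card : ℂ) ^ 2)‖ := by rw [hc]
      _ ≤ s * ((p : ℝ) * Z.card) := hkey
  have part1 : |(S.card : ℝ) - (X.card : ℝ) * (Y.card : ℝ) * (Z.card : ℝ) ^ 2 / p|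
      ≤ s * (Z.card : ℝ) := by
    have heq : (S.card : ℝ) - (X.card : ℝ) * (Y.card : ℝ) * (Z.card : ℝ) ^ 2 / p
        = ((S.card : ℝ) * p - (X.card : ℝ) * Y.card * (Z.card : ℝ) ^ 2) / p := by
      field_simp
    rw [heq, abs_div, abs_of_pos hp0, div_le_iff₀ hp0]
    calc |(S.card : ℝ) * p - (X.card : ℝ) * Y.card * (Z.card : ℝ) ^ 2|
        ≤ s * ((p : ℝ) * Z.card) := hreal
      _ = s * (Z.card : ℝ) * p := by ring
  refine ⟨part1, fun hbig => ?_⟩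
  have hs2 : s ^ 2 = (p : ℝ) * X.card * Y.card := Real.sq_sqrt (by positivity)
  have hp3 : (0 : ℝ) < (p : ℝ) ^ 3 := by positivity
  have h1 : (0 : ℝ) < (X.card : ℝ) * Y.card * (Z.card : ℝ) ^ 2 := hp3.trans hbig
  have hszp : s * (Z.card : ℝ) * p < (X.card : ℝ) * Y.card * (Z.card : ℝ) ^ 2 := by
    have h2 : (s * (Z.card : ℝ) * p) ^ 2
        < ((X.card : ℝ) * Y.card * (Z.card : ℝ) ^ 2) ^ 2 := by
      have h3 : (s * (Z.card : ℝ) * p) ^ 2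
          = (p : ℝ) ^ 3 * ((X.card : ℝ) * Y.card * (Z.card : ℝ) ^ 2) := by
        have : (s * (Z.card : ℝ) * p) ^ 2 = s ^ 2 * ((Z.card : ℝ) ^ 2 * (p : ℝ) ^ 2) := by ring
        rw [this, hs2]; ring
      have h4 := mul_lt_mul_of_pos_right hbig h1
      linarith
    have ha : (0 : ℝ) ≤ s * (Z.card : ℝ) * p := by positivity
    nlinarith [h2, h1, ha]
  have hT : (0 : ℝ) < (S.card : ℝ) := by
    have habs := (abs_le.mp part1).1
    have hlt : s * (Z.card : ℝ) < (X.card : ℝ) * Y.card * (Z.card : ℝ) ^ 2 / p := by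
      rw [lt_div_iff₀ hp0]; exact hszp
    linarith
  exact_mod_cast hT
end

section
/- Let 0 < γ < 1/3. There exist positive constants c₁ = c₁(γ) and c₂ = c₂(γ) such that for every ε > 0 there exists N₀ with the following property: for all N ≥ N₀, the number of primes p ≤ N for which the two-sided bound c₁·N^{γ/2} ≤ (1/p)·∑_{x=0}^{p−1} |∑_{1 ≤ n ≤ N^γ} e^{2πi x F_n / p}| ≤ c₂·N^{γ/2} FAILS is at most ε·π(N). -/
open Finset Nat Complex



noncomputable def ep (p : ℕ) (t : ℤ) : ℂ := Complex.exp (2 * Real.pi * Complex.I * t / p)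

lemma ep_add (p : ℕ) (s t : ℤ) : ep p (s + t) = ep p s * ep p t := by
  rw [ep, ep, ep, ← Complex.exp_add]; congr 1; push_cast; ring

lemma ep_conj (p : ℕ) (t : ℤ) : (starRingEnd ℂ) (ep p t) = ep p (-t) := by
  rw [ep, ep, ← Complex.exp_conj]
  congr 1
  simp [map_div₀, map_mul, Complex.conj_I, Complex.conj_ofReal, map_ofNat]

lemma ep_pow (p : ℕ) (t : ℤ) (x : ℕ) : ep p t ^ x = ep p (x * t) := by
  rw [ep, ep, ← Complex.exp_nat_mul]; congr 1; push_cast; ring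

lemma ep_one_of_dvd (p : ℕ) (hp : 0 < p) (t : ℤ) (h : (p : ℤ) ∣ t) : ep p t = 1 := by
  obtain ⟨k, hk⟩ := h
  rw [ep, hk]
  have hp0 : (p : ℂ) ≠ 0 := Nat.cast_ne_zero.2 hp.ne'
  have : 2 * (Real.pi:ℂ) * Complex.I * ((p:ℤ) * k : ℤ) / p = k * (2 * Real.pi * Complex.I) := by
    push_cast; field_simp
  rw [this, Complex.exp_int_mul_two_pi_mul_I]

lemma ep_orth (p : ℕ) (hp : 0 < p) (t : ℤ) :
    ∑ x ∈ range p, ep p (x * t) = if (p : ℤ) ∣ t then (p : ℂ) else 0 := by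
  have h1 : ∀ x ∈ range p, ep p (x * t) = ep p t ^ x := fun x _ => (ep_pow p t x).symm
  rw [Finset.sum_congr rfl h1]
  by_cases h : (p : ℤ) ∣ t
  · rw [if_pos h]
    simp [ep_one_of_dvd p hp t h]
  · rw [if_neg h]
    have hp0 : (p : ℂ) ≠ 0 := Nat.cast_ne_zero.2 hp.ne'
    have h2 : (2 * (Real.pi:ℂ) * Complex.I) ≠ 0 := by
      simp [Real.pi_ne_zero, Complex.I_ne_zero]
    have hne : ep p t ≠ 1 := by
      intro he
      rw [ep, Complex.exp_eq_one_iff] at he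
      obtain ⟨n, hn⟩ := he
      apply h
      refine ⟨n, ?_⟩
      have : (t : ℂ) = (p : ℂ) * n := by
        field_simp at hn
        have hn' : 2*(Real.pi:ℂ)*Complex.I*(t:ℂ) = 2*(Real.pi:ℂ)*Complex.I*((p:ℂ)*n) := by
          linear_combination (2*(Real.pi:ℂ)*Complex.I) * hn
        exact mul_left_cancel₀ h2 hn'
      exact_mod_cast this
    rw [geom_sum_eq hne p, ep_pow p t p, ep_one_of_dvd p hp _ ⟨t, by ring⟩]
    simp

lemma sum_norm_sq (p : ℕ) (hp : 0 < p) {ι : Type*} [DecidableEq ι] (s : Finset ι) (g : ι → ℤ) :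
    ∑ x ∈ range p, ‖∑ i ∈ s, ep p (x * g i)‖^2
      = p * #((s ×ˢ s).filter fun q => (p:ℤ) ∣ (g q.1 - g q.2)) := by
  set T : ℕ → ℂ := fun x => ∑ i ∈ s, ep p (x * g i) with hT
  have key : (↑(∑ x ∈ range p, ‖T x‖^2) : ℂ)
      = (p : ℂ) * #((s ×ˢ s).filter fun q => (p:ℤ) ∣ (g q.1 - g q.2)) := by
    push_cast
    have h1 : ∀ x, (‖T x‖:ℂ)^2 = T x * (starRingEnd ℂ) (T x) := by
      intro x
      rw [Complex.mul_conj]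
      norm_cast
      rw [Complex.normSq_eq_norm_sq]
    rw [Finset.sum_congr rfl (fun x _ => h1 x)]
    have h2 : ∀ x : ℕ, T x * (starRingEnd ℂ) (T x)
        = ∑ q ∈ s ×ˢ s, ep p (x * (g q.1 - g q.2)) := by
      intro x
      rw [hT, map_sum, Finset.sum_mul_sum, Finset.sum_product]
      refine Finset.sum_congr rfl fun i _ => Finset.sum_congr rfl fun j _ => ?_
      rw [ep_conj, ← ep_add]
      congr 1
      ring
    rw [Finset.sum_congr rfl (fun x _ => h2 x), Finset.sum_comm]
    rw [Finset.sum_congr rfl (fun q _ => ep_orth p hp (g q.1 - g q.2))]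
    rw [Finset.sum_ite, Finset.sum_const, Finset.sum_const_zero]
    simp [mul_comm]
  exact_mod_cast key


lemma fib_le_two_pow : ∀ n : ℕ, fib n ≤ 2 ^ n := by
  intro n
  induction n using Nat.twoStepInduction with
  | zero => simp
  | one => simp
  | more n ih1 ih2 =>
    rw [fib_add_two]
    calc fib n + fib (n+1) ≤ 2^n + 2^(n+1) := Nat.add_le_add ih1 ih2
    _ ≤ 2^(n+2) := by ring_nf; omega

lemma card_fib_eq_le (M v : ℕ) : #((Icc 1 M).filter fun c => fib c = v) ≤ 2 := by
  set t := (Icc 1 M).filter fun c => fib c = v with ht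
  by_cases h : t.Nonempty
  · have hsub : t ⊆ {t.min' h, t.min' h + 1} := by
      intro e he
      set e₀ := t.min' h
      have he₀ : e₀ ∈ t := t.min'_mem h
      have h1 : 1 ≤ e₀ := (mem_Icc.1 (mem_filter.1 he₀).1).1
      have hge : e₀ ≤ e := t.min'_le e he
      have hfe : fib e = v := (mem_filter.1 he).2
      have hfe₀ : fib e₀ = v := (mem_filter.1 he₀).2
      simp only [mem_insert, mem_singleton]
      by_contra hc
      push_neg at hc
      have h2 : e₀ + 2 ≤ e := by omega
      have : fib e₀ < fib e := by
        calc fib e₀ ≤ fib (e₀ + 1) := fib_le_fib_succ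
        _ < fib (e₀ + 2) := fib_lt_fib_succ (by omega)
        _ ≤ fib e := fib_mono h2
      omega
    calc #t ≤ #({t.min' h, t.min' h + 1} : Finset ℕ) := card_le_card hsub
    _ ≤ 2 := card_insert_le _ _ |>.trans (by simp)
  · rw [not_nonempty_iff_eq_empty] at h
    simp [h]

lemma card_window_le (M S : ℕ) :
    #((Icc 1 M).filter fun e => S ≤ 2 * fib e ∧ fib e ≤ S) ≤ 3 := by
  set t := (Icc 1 M).filter fun e => S ≤ 2 * fib e ∧ fib e ≤ S with ht
  set t2 := t.filter (fun e => 2 ≤ e) with ht2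
  by_cases h : t2.Nonempty
  · set e₀ := t2.min' h with he₀def
    have he₀ : e₀ ∈ t2 := t2.min'_mem h
    have h2e₀ : 2 ≤ e₀ := (mem_filter.1 he₀).2
    have hw₀ : S ≤ 2 * fib e₀ ∧ fib e₀ ≤ S := (mem_filter.1 (mem_filter.1 he₀).1).2
    have hsub : t ⊆ {1, e₀, e₀ + 1} := by
      intro e he
      simp only [mem_insert, mem_singleton]
      by_contra hc
      push_neg at hc
      have h1e : 1 ≤ e := (mem_Icc.1 (mem_filter.1 he).1).1
      have h2e : 2 ≤ e := by omega
      have hge : e₀ ≤ e := t2.min'_le e (mem_filter.2 ⟨he, h2e⟩)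
      have h2 : e₀ + 2 ≤ e := by omega
      have hwe : S ≤ 2 * fib e ∧ fib e ≤ S := (mem_filter.1 he).2
      have : 2 * fib e₀ < fib e := by
        have ha : fib e₀ < fib (e₀ + 1) := fib_lt_fib_succ h2e₀
        have hb : fib (e₀ + 2) ≤ fib e := fib_mono h2
        rw [fib_add_two] at hb
        omega
      omega
    calc #t ≤ #({1, e₀, e₀ + 1} : Finset ℕ) := card_le_card hsub
    _ ≤ 3 := (card_insert_le _ _).trans (by simp [card_insert_le])
  · rw [not_nonempty_iff_eq_empty] at h
    have hsub : t ⊆ {1} := by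
      intro e he
      have h1e : 1 ≤ e := (mem_Icc.1 (mem_filter.1 he).1).1
      by_contra hc
      simp only [mem_singleton] at hc
      have : e ∈ t2 := mem_filter.2 ⟨he, by omega⟩
      simp [h] at this
    exact (card_le_card hsub).trans (by simp)

lemma card_fiber_le (M S : ℕ) :
    #(((Icc 1 M) ×ˢ (Icc 1 M)).filter fun q => fib q.1 + fib q.2 = S) ≤ 12 := by
  classical
  have hsub : (((Icc 1 M) ×ˢ (Icc 1 M)).filter fun q => fib q.1 + fib q.2 = S) ⊆
      ((Icc 1 M).filter (fun e => S ≤ 2 * fib e ∧ fib e ≤ S)).biUnion (fun e =>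
        (((Icc 1 M).filter fun c => fib c = S - fib e).image (fun c => (c, e))) ∪
        (((Icc 1 M).filter fun c => fib c = S - fib e).image (fun c => (e, c)))) := by
    rintro ⟨c, d⟩ hq
    obtain ⟨hmem, heq⟩ := mem_filter.1 hq
    dsimp only at heq
    obtain ⟨hc, hd⟩ := mem_product.1 hmem
    simp only [mem_biUnion, mem_union, mem_image, mem_filter]
    rcases le_total (fib c) (fib d) with hle | hle
    · exact ⟨d, ⟨hd, by omega, by omega⟩, Or.inl ⟨c, ⟨hc, by omega⟩, rfl⟩⟩
    · exact ⟨c, ⟨hc, by omega, by omega⟩, Or.inr ⟨d, ⟨hd, by omega⟩, rfl⟩⟩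
  calc #((((Icc 1 M) ×ˢ (Icc 1 M))).filter fun q => fib q.1 + fib q.2 = S)
      ≤ ∑ e ∈ (Icc 1 M).filter (fun e => S ≤ 2 * fib e ∧ fib e ≤ S),
          #((((Icc 1 M).filter fun c => fib c = S - fib e).image (fun c => (c, e))) ∪
        (((Icc 1 M).filter fun c => fib c = S - fib e).image (fun c => (e, c)))) :=
        (card_le_card hsub).trans (card_biUnion_le)
    _ ≤ ∑ _e ∈ (Icc 1 M).filter (fun e => S ≤ 2 * fib e ∧ fib e ≤ S), 4 := by
        refine Finset.sum_le_sum fun e _ => ?_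
        refine (card_union_le _ _).trans ?_
        have h1 := card_image_le (s := (Icc 1 M).filter fun c => fib c = S - fib e)
          (f := fun c => (c, e))
        have h2 := card_image_le (s := (Icc 1 M).filter fun c => fib c = S - fib e)
          (f := fun c => (e, c))
        have h3 := card_fib_eq_le M (S - fib e)
        omega
    _ ≤ 12 := by
        rw [Finset.sum_const, smul_eq_mul]
        have := card_window_le M S
        omega

lemma card_D0_le (M : ℕ) :
    #(((Icc 1 M ×ˢ Icc 1 M) ×ˢ (Icc 1 M ×ˢ Icc 1 M)).filter
      fun q => fib q.2.1 + fib q.2.2 = fib q.1.1 + fib q.1.2) ≤ 12 * M ^ 2 := by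
  classical
  set I := Icc 1 M with hI
  set F := ((I ×ˢ I) ×ˢ (I ×ˢ I)).filter
      (fun q => fib q.2.1 + fib q.2.2 = fib q.1.1 + fib q.1.2) with hF
  have hcard : #F = ∑ u ∈ I ×ˢ I, #(F.filter fun q => q.1 = u) :=
    card_eq_sum_card_fiberwise (fun q hq => (mem_product.1 (mem_filter.1 hq).1).1)
  rw [hcard]
  have hfib : ∀ u ∈ I ×ˢ I, #(F.filter fun q => q.1 = u) ≤ 12 := by
    intro u hu
    have hinj : #(F.filter fun q => q.1 = u)
        ≤ #(((I ×ˢ I)).filter fun v => fib v.1 + fib v.2 = fib u.1 + fib u.2) := by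
      refine Finset.card_le_card_of_injOn (fun q => q.2) ?_ ?_
      · rintro ⟨a, b⟩ hq
        obtain ⟨hq1, hq2⟩ := mem_filter.1 hq
        obtain ⟨hmem, heq⟩ := mem_filter.1 hq1
        refine mem_filter.2 ⟨(mem_product.1 hmem).2, ?_⟩
        subst hq2
        exact heq
      · rintro ⟨a1, b1⟩ h1 ⟨a2, b2⟩ h2 heq
        have e1 := (mem_filter.1 h1).2
        have e2 := (mem_filter.1 h2).2
        simp only at heq
        ext <;> simp_all
    exact hinj.trans (card_fiber_le M _)
  calc ∑ u ∈ I ×ˢ I, #(F.filter fun q => q.1 = u) ≤ ∑ u ∈ I ×ˢ I, 12 :=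
        Finset.sum_le_sum hfib
    _ = 12 * M ^ 2 := by
        rw [Finset.sum_const, smul_eq_mul, card_product, hI, Nat.card_Icc]
        have h : M + 1 - 1 = M := by omega
        rw [h]
        ring

def Dz (q : (ℕ × ℕ) × ℕ × ℕ) : ℤ :=
  (fib q.1.1 : ℤ) + (fib q.1.2 : ℤ) - ((fib q.2.1 : ℤ) + (fib q.2.2 : ℤ))

lemma card_primes_dvd_le (s : Finset ℕ) (hs : ∀ p ∈ s, p.Prime) (z : ℤ) (hz : z ≠ 0) (k : ℕ)
    (hbound : z.natAbs ≤ 2 ^ k) : #(s.filter fun p : ℕ => (p:ℤ) ∣ z) ≤ k := by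
  have hsub : s.filter (fun p : ℕ => (p:ℤ) ∣ z) ⊆ z.natAbs.primeFactors := by
    intro p hp
    obtain ⟨hps, hdvd⟩ := mem_filter.1 hp
    refine Nat.mem_primeFactors.2 ⟨hs p hps, ?_, by simpa using hz⟩
    exact Int.natCast_dvd_natCast.1 (Int.dvd_natAbs.2 hdvd)
  have h1 : 2 ^ #(s.filter fun p : ℕ => (p:ℤ) ∣ z) ≤ z.natAbs := by
    calc 2 ^ #(s.filter fun p : ℕ => (p:ℤ) ∣ z) ≤ 2 ^ #z.natAbs.primeFactors :=
          Nat.pow_le_pow_right (by norm_num) (card_le_card hsub)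
    _ ≤ ∏ p ∈ z.natAbs.primeFactors, p :=
          Finset.pow_card_le_prod _ _ _ (fun p hp => (Nat.prime_of_mem_primeFactors hp).two_le)
    _ ≤ z.natAbs := Nat.le_of_dvd (by simpa using hz) (Nat.prod_primeFactors_dvd _)
  exact (Nat.pow_le_pow_iff_right (by norm_num)).1 (h1.trans hbound)

lemma card_bad_le (N M : ℕ) (hM : 1 ≤ M) :
    #(((range (N+1)).filter Nat.Prime).filter fun p : ℕ =>
        M^2 < #((((Icc 1 M ×ˢ Icc 1 M) ×ˢ (Icc 1 M ×ˢ Icc 1 M))).filter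
          fun q => Dz q ≠ 0 ∧ (p:ℤ) ∣ Dz q)) ≤ 2 * M^3 := by
  classical
  set P := (range (N+1)).filter Nat.Prime with hP
  set Q := ((Icc 1 M ×ˢ Icc 1 M) ×ˢ (Icc 1 M ×ˢ Icc 1 M)) with hQ
  set B := P.filter (fun p : ℕ => M^2 < #(Q.filter fun q => Dz q ≠ 0 ∧ (p:ℤ) ∣ Dz q)) with hB
  have key : #B * (M^2 + 1) ≤ ∑ p ∈ P, #(Q.filter fun q => Dz q ≠ 0 ∧ (p:ℤ) ∣ Dz q) := by
    calc #B * (M^2 + 1) = ∑ _p ∈ B, (M^2 + 1) := by rw [Finset.sum_const, smul_eq_mul]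
    _ ≤ ∑ p ∈ B, #(Q.filter fun q => Dz q ≠ 0 ∧ (p:ℤ) ∣ Dz q) :=
        Finset.sum_le_sum fun p hp => (mem_filter.1 hp).2
    _ ≤ ∑ p ∈ P, #(Q.filter fun q => Dz q ≠ 0 ∧ (p:ℤ) ∣ Dz q) :=
        Finset.sum_le_sum_of_subset (filter_subset _ _)
  have swap : ∑ p ∈ P, #(Q.filter fun q => Dz q ≠ 0 ∧ (p:ℤ) ∣ Dz q)
      = ∑ q ∈ Q, ∑ p ∈ P, (if Dz q ≠ 0 ∧ (p:ℤ) ∣ Dz q then 1 else 0) := by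
    rw [Finset.sum_comm]
    exact Finset.sum_congr rfl fun p _ => by rw [Finset.card_filter]
  have inner_le : ∀ q ∈ Q, ∑ p ∈ P, (if Dz q ≠ 0 ∧ (p:ℤ) ∣ Dz q then 1 else 0) ≤ M + 1 := by
    intro q hq
    by_cases h0 : Dz q = 0
    · simp [h0]
    · have : ∑ p ∈ P, (if Dz q ≠ 0 ∧ (p:ℤ) ∣ Dz q then 1 else 0)
          = #(P.filter fun p : ℕ => (p:ℤ) ∣ Dz q) := by
        rw [Finset.card_filter]
        exact Finset.sum_congr rfl fun p _ => by simp [h0]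
      rw [this]
      refine card_primes_dvd_le P (fun p hp => (mem_filter.1 hp).2) _ h0 (M+1) ?_
      obtain ⟨hu, hv⟩ := mem_product.1 hq
      obtain ⟨ha, hb⟩ := mem_product.1 hu
      obtain ⟨hc, hd⟩ := mem_product.1 hv
      have h1 : fib q.1.1 ≤ 2 ^ M := (fib_le_two_pow _).trans
        (Nat.pow_le_pow_right (by norm_num) (mem_Icc.1 ha).2)
      have h2 : fib q.1.2 ≤ 2 ^ M := (fib_le_two_pow _).trans
        (Nat.pow_le_pow_right (by norm_num) (mem_Icc.1 hb).2)
      have h3 : fib q.2.1 ≤ 2 ^ M := (fib_le_two_pow _).trans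
        (Nat.pow_le_pow_right (by norm_num) (mem_Icc.1 hc).2)
      have h4 : fib q.2.2 ≤ 2 ^ M := (fib_le_two_pow _).trans
        (Nat.pow_le_pow_right (by norm_num) (mem_Icc.1 hd).2)
      rw [Dz]
      have : (2:ℕ) ^ (M+1) = 2^M + 2^M := by ring
      omega
  have total : ∑ p ∈ P, #(Q.filter fun q => Dz q ≠ 0 ∧ (p:ℤ) ∣ Dz q) ≤ M^4 * (M+1) := by
    rw [swap]
    calc ∑ q ∈ Q, ∑ p ∈ P, (if Dz q ≠ 0 ∧ (p:ℤ) ∣ Dz q then 1 else 0)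
        ≤ ∑ _q ∈ Q, (M+1) := Finset.sum_le_sum inner_le
    _ = M^4 * (M+1) := by
        rw [Finset.sum_const, smul_eq_mul, hQ]
        simp [Nat.card_Icc]
        ring
  have hfin : #B * (M^2+1) ≤ M^4 * (M+1) := key.trans total
  have : M^4 * (M+1) ≤ 2 * M^3 * (M^2 + 1) := by
    have h45 : M^4 ≤ M^5 := Nat.pow_le_pow_right hM (by norm_num)
    nlinarith [h45]
  have h2 : #B * (M^2+1) ≤ 2 * M^3 * (M^2+1) := hfin.trans this
  exact Nat.le_of_mul_le_mul_right h2 (by positivity)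


lemma centralBinom_le_pow (n : ℕ) (hn : 1 ≤ n) :
    centralBinom n ≤ (2*n) ^ ((2*n).primeCounting) := by
  have hne : centralBinom n ≠ 0 := (centralBinom_pos n).ne'
  have hpf : (centralBinom n).primeFactors ⊆ primesBelow (2*n+1) := by
    intro p hp
    obtain ⟨hprime, hdvd, -⟩ := Nat.mem_primeFactors.1 hp
    have hν : 1 ≤ (centralBinom n).factorization p :=
      (Nat.Prime.factorization_pos_of_dvd hprime hne hdvd)
    have := Nat.pow_factorization_choose_le (p := p) (n := 2*n) (k := n) (by omega)
    rw [Nat.mem_primesBelow]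
    constructor
    · have hp1 : p ≤ p ^ (centralBinom n).factorization p :=
        Nat.le_self_pow (by omega) p
      rw [← Nat.centralBinom_eq_two_mul_choose] at this
      omega
    · exact hprime
  have hcount : #((centralBinom n).primeFactors) ≤ (2*n).primeCounting := by
    have h1 : #(primesBelow (2*n+1)) = (2*n+1).primeCounting' :=
      primesBelow_card_eq_primeCounting' _
    have h2 : (2*n).primeCounting = (2*n+1).primeCounting' := rfl
    rw [h2, ← h1]
    exact card_le_card hpf
  calc centralBinom n
      = ∏ p ∈ (centralBinom n).primeFactors, p ^ (centralBinom n).factorization p :=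
        (Nat.factorization_prod_pow_eq_self hne).symm
    _ ≤ ∏ _p ∈ (centralBinom n).primeFactors, 2*n := by
        refine Finset.prod_le_prod' ?_  -- maybe wrong name
        intro p hp
        have := Nat.pow_factorization_choose_le (p := p) (n := 2*n) (k := n) (by omega)
        rw [← Nat.centralBinom_eq_two_mul_choose] at this
        exact this
    _ = (2*n) ^ #((centralBinom n).primeFactors) := by
        rw [Finset.prod_const]
    _ ≤ (2*n) ^ ((2*n).primeCounting) := Nat.pow_le_pow_right (by omega) hcount

lemma pi_lower (N : ℕ) (h : 60 ≤ N) :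
    (N : ℝ) ≤ 4 * (N.primeCounting : ℝ) * Real.log N := by
  set n := N / 2 with hn
  have hn30 : 30 ≤ n := by omega
  have h4 : 4 ^ n < n * centralBinom n := four_pow_lt_mul_centralBinom n (by omega)
  have hcb : centralBinom n ≤ (2*n) ^ ((2*n).primeCounting) := centralBinom_le_pow n (by omega)
  have hkey : (4:ℝ) ^ n ≤ n * (2*n : ℕ) ^ ((2*n).primeCounting) := by
    have : (4:ℕ) ^ n ≤ n * (2*n) ^ ((2*n).primeCounting) :=
      (h4.le).trans (Nat.mul_le_mul_left n hcb)
    exact_mod_cast this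
  -- take logs
  have hnR : (1:ℝ) ≤ (n:ℝ) := by exact_mod_cast (by omega : 1 ≤ n)
  have h2n : (2:ℝ) ≤ (2*n : ℕ) := by exact_mod_cast (by omega : 2 ≤ 2*n)
  have hlog : (n:ℝ) * Real.log 4 ≤ Real.log n + ((2*n).primeCounting : ℝ) * Real.log (2*n : ℕ) := by
    have hl := Real.log_le_log (by positivity) hkey
    rw [Real.log_pow, Real.log_mul (by linarith) (by positivity), Real.log_pow] at hl
    exact_mod_cast hl
  -- log n ≤ 2 * sqrt n
  have hsq : Real.log n ≤ 2 * Real.sqrt n := by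
    have h1 : Real.log n = 2 * Real.log (Real.sqrt n) := by
      rw [Real.log_sqrt (by positivity)]; ring
    have h2 : Real.log (Real.sqrt n) ≤ Real.sqrt n - 1 :=
      Real.log_le_sub_one_of_pos (by positivity)
    nlinarith [Real.sqrt_nonneg (n:ℝ)]
  -- 2 sqrt n ≤ 0.38 n since n ≥ 30
  have hsqn : 2 * Real.sqrt (n:ℝ) ≤ 0.38 * n := by
    have h30 : (30:ℝ) ≤ n := by exact_mod_cast hn30
    have hs : Real.sqrt (n:ℝ) * Real.sqrt (n:ℝ) = n := Real.mul_self_sqrt (by positivity)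
    have hs2 : (5.47:ℝ) ≤ Real.sqrt n := by
      nlinarith [Real.sqrt_nonneg (n:ℝ), Real.sq_sqrt (show (0:ℝ) ≤ n by positivity)]
    nlinarith [Real.sqrt_nonneg (n:ℝ)]
  have hlog4 : (1.38:ℝ) ≤ Real.log 4 := by
    have h2 : Real.log 4 = 2 * Real.log 2 := by
      rw [show (4:ℝ) = 2^2 by norm_num, Real.log_pow]; push_cast; ring
    have := Real.log_two_gt_d9
    nlinarith
  have hmain : (n:ℝ) ≤ ((2*n).primeCounting : ℝ) * Real.log (2*n : ℕ) := by nlinarith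
  -- now transfer to N
  have hmono : ((2*n).primeCounting : ℝ) ≤ (N.primeCounting : ℝ) := by
    exact_mod_cast monotone_primeCounting (by omega : 2*n ≤ N)
  have hlogmono : Real.log (2*n : ℕ) ≤ Real.log N := by
    apply Real.log_le_log (by positivity)
    exact_mod_cast (by omega : 2*n ≤ N)
  have hπpos : (0:ℝ) ≤ ((2*n).primeCounting : ℝ) := by positivity
  have hlogN : (0:ℝ) ≤ Real.log N := Real.log_nonneg (by exact_mod_cast (by omega : 1 ≤ N))
  have hlog2n : (0:ℝ) ≤ Real.log (2*n:ℕ) := Real.log_nonneg (by exact_mod_cast (by omega : 1 ≤ 2*n))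
  have hNn : (N:ℝ) ≤ 4 * n := by
    have : N ≤ 4 * n := by omega
    exact_mod_cast this
  calc (N:ℝ) ≤ 4 * n := hNn
    _ ≤ 4 * (((2*n).primeCounting : ℝ) * Real.log (2*n : ℕ)) := by linarith
    _ ≤ 4 * ((N.primeCounting : ℝ) * Real.log N) := by
        have := mul_le_mul hmono hlogmono hlog2n (by positivity)
        linarith
    _ = 4 * (N.primeCounting : ℝ) * Real.log N := by ring

lemma good_prime_bound (p M : ℕ) (hp : 0 < p) (hM : 1 ≤ M)
    (hC4 : #((((Icc 1 M ×ˢ Icc 1 M) ×ˢ (Icc 1 M ×ˢ Icc 1 M))).filter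
      fun q => (p:ℤ) ∣ Dz q) ≤ 13 * M^2) :
    Real.sqrt ((M:ℝ) / 13) ≤ (1/(p:ℝ)) * ∑ x ∈ range p, ‖∑ n ∈ Icc 1 M, ep p (x * fib n)‖ ∧
    (1/(p:ℝ)) * ∑ x ∈ range p, ‖∑ n ∈ Icc 1 M, ep p (x * fib n)‖ ≤ Real.sqrt (13 * (M:ℝ)) := by
  classical
  set S : ℕ → ℂ := fun x => ∑ n ∈ Icc 1 M, ep p (x * fib n) with hS
  set a : ℕ → ℝ := fun x => ‖S x‖ with ha
  have ha0 : ∀ x, 0 ≤ a x := fun x => norm_nonneg _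
  -- second moment
  set C2 := #(((Icc 1 M) ×ˢ (Icc 1 M)).filter fun q => (p:ℤ) ∣ ((fib q.1 : ℤ) - (fib q.2 : ℤ)))
    with hC2def
  have hB : ∑ x ∈ range p, (a x)^2 = (p : ℝ) * C2 := by
    have := sum_norm_sq p hp (Icc 1 M) (fun n => (fib n : ℤ))
    exact this
  -- fourth moment
  set C4 := #((((Icc 1 M ×ˢ Icc 1 M) ×ˢ (Icc 1 M ×ˢ Icc 1 M))).filter
      fun q => (p:ℤ) ∣ Dz q) with hC4def
  have hSsq : ∀ x : ℕ, S x ^ 2 = ∑ q ∈ (Icc 1 M) ×ˢ (Icc 1 M),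
      ep p (x * ((fib q.1 : ℤ) + (fib q.2 : ℤ))) := by
    intro x
    rw [hS, sq, Finset.sum_mul_sum, ← Finset.sum_product']
    refine Finset.sum_congr rfl fun q _ => ?_
    rw [← ep_add]
    congr 1
    ring
  have hC : ∑ x ∈ range p, (a x)^4 = (p : ℝ) * C4 := by
    have h1 : ∀ x : ℕ, (a x)^4 = ‖S x ^ 2‖^2 := by
      intro x
      rw [norm_pow]
      ring
    rw [Finset.sum_congr rfl fun x _ => h1 x]
    rw [Finset.sum_congr rfl fun x _ => by rw [hSsq x]]
    have := sum_norm_sq p hp ((Icc 1 M) ×ˢ (Icc 1 M))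
      (fun q => (fib q.1 : ℤ) + (fib q.2 : ℤ))
    rw [this]
    congr 1
  -- C2 ≥ M
  have hC2ge : (M:ℝ) ≤ C2 := by
    have : M ≤ C2 := by
      have hinj : #(Icc 1 M) ≤ C2 := by
        refine Finset.card_le_card_of_injOn (fun n => (n, n)) ?_ ?_
        · intro n hn
          refine mem_filter.2 ⟨mem_product.2 ⟨hn, hn⟩, by simp⟩
        · intro n _ m _ h
          exact (Prod.ext_iff.1 h).1
      simpa using hinj
    exact_mod_cast this
  -- C2 * M ≤ C4
  have hC2C4 : C2 * M ≤ C4 := by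
    have : #((((Icc 1 M) ×ˢ (Icc 1 M)).filter fun q =>
        (p:ℤ) ∣ ((fib q.1 : ℤ) - (fib q.2 : ℤ))) ×ˢ Icc 1 M) ≤ C4 := by
      refine Finset.card_le_card_of_injOn (fun w => ((w.1.1, w.2), (w.1.2, w.2))) ?_ ?_
      · rintro ⟨⟨n, m⟩, b⟩ hw
        obtain ⟨hq, hb⟩ := mem_product.1 hw
        obtain ⟨hnm, hdvd⟩ := mem_filter.1 hq
        obtain ⟨hn, hm⟩ := mem_product.1 hnm
        refine mem_filter.2 ⟨?_, ?_⟩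
        · exact mem_product.2 ⟨mem_product.2 ⟨hn, hb⟩, mem_product.2 ⟨hm, hb⟩⟩
        · simp only [Dz]
          convert hdvd using 1
          push_cast
          ring
      · rintro ⟨⟨n1, m1⟩, b1⟩ _ ⟨⟨n2, m2⟩, b2⟩ _ h
        simp only [Prod.mk.injEq] at h
        obtain ⟨⟨h1, h2⟩, h3, h4⟩ := h
        simp_all
    rwa [card_product, Nat.card_Icc, show M + 1 - 1 = M from by omega] at this
  have hC4le : (C4 : ℝ) ≤ 13 * (M:ℝ)^2 := by exact_mod_cast hC4
  have hC2le : (C2 : ℝ) ≤ 13 * (M:ℝ) := by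
    have h1 : (C2 : ℝ) * M ≤ 13 * (M:ℝ)^2 := by
      calc (C2:ℝ) * M ≤ (C4:ℝ) := by exact_mod_cast hC2C4
      _ ≤ 13 * (M:ℝ)^2 := hC4le
    have hMpos : (0:ℝ) < M := by exact_mod_cast hM
    nlinarith
  -- Cauchy-Schwarz inequalities
  set A := ∑ x ∈ range p, a x with hA
  set A3 := ∑ x ∈ range p, (a x)^3 with hA3
  set B := ∑ x ∈ range p, (a x)^2 with hBdef
  set C := ∑ x ∈ range p, (a x)^4 with hCdef
  have hA0 : 0 ≤ A := Finset.sum_nonneg fun x _ => ha0 x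
  have hCS1 : B^2 ≤ A * A3 := by
    have := Finset.sum_mul_sq_le_sq_mul_sq (range p)
      (fun x => Real.sqrt (a x)) (fun x => Real.sqrt (a x) * a x)
    have heq : ∀ x ∈ range p, Real.sqrt (a x) * (Real.sqrt (a x) * a x) = (a x)^2 := by
      intro x _
      rw [← mul_assoc, Real.mul_self_sqrt (ha0 x)]
      ring
    have heq2 : ∀ x ∈ range p, Real.sqrt (a x) ^ 2 = a x := fun x _ => Real.sq_sqrt (ha0 x)
    have heq3 : ∀ x ∈ range p, (Real.sqrt (a x) * a x)^2 = (a x)^3 := by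
      intro x _
      rw [mul_pow, Real.sq_sqrt (ha0 x)]
      ring
    rw [Finset.sum_congr rfl heq, Finset.sum_congr rfl heq2, Finset.sum_congr rfl heq3] at this
    exact this
  have hCS2 : A3^2 ≤ B * C := by
    have := Finset.sum_mul_sq_le_sq_mul_sq (range p) (fun x => a x) (fun x => (a x)^2)
    have heq : ∀ x ∈ range p, a x * (a x)^2 = (a x)^3 := fun x _ => by ring
    have heq2 : ∀ x ∈ range p, ((a x)^2)^2 = (a x)^4 := fun x _ => by ring
    rw [Finset.sum_congr rfl heq, Finset.sum_congr rfl heq2] at this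
    exact this
  have hCS3 : A^2 ≤ (p:ℝ) * B := by
    have := Finset.sum_mul_sq_le_sq_mul_sq (range p) (fun _ => (1:ℝ)) (fun x => a x)
    simp only [one_mul, one_pow] at this
    simpa [card_range] using this
  have hppos : (0:ℝ) < p := by exact_mod_cast hp
  have hMpos : (0:ℝ) < M := by exact_mod_cast hM
  have hBge : (p:ℝ) * M ≤ B := by
    rw [hB]
    exact mul_le_mul_of_nonneg_left hC2ge (le_of_lt hppos)
  have hBpos : 0 < B := lt_of_lt_of_le (by positivity) hBge
  have hCle : C ≤ (p:ℝ) * (13 * M^2) := by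
    rw [hC]
    exact mul_le_mul_of_nonneg_left hC4le (le_of_lt hppos)
  have hCpos : 0 ≤ C := Finset.sum_nonneg fun x _ => by positivity
  have hA30 : 0 ≤ A3 := Finset.sum_nonneg fun x _ => by positivity
  -- B^3 ≤ A^2 * C
  have hkey : B^3 ≤ A^2 * C := by
    have h1 : B^4 ≤ A^2 * A3^2 := by
      calc B^4 = (B^2)^2 := by ring
      _ ≤ (A * A3)^2 := by
          apply pow_le_pow_left₀ (by positivity) hCS1
      _ = A^2 * A3^2 := by ring
    have h2 : B^4 ≤ A^2 * (B * C) := by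
      calc B^4 ≤ A^2 * A3^2 := h1
      _ ≤ A^2 * (B * C) := by
          apply mul_le_mul_of_nonneg_left hCS2 (by positivity)
    nlinarith [hBpos]
  constructor
  · -- lower bound
    have h1 : ((p:ℝ))^2 * ((M:ℝ)/13) ≤ A^2 := by
      have hc13 : (0:ℝ) < 13 := by norm_num
      have h2 : B^3 ≥ ((p:ℝ)*M)^3 := by
        apply pow_le_pow_left₀ (by positivity) hBge
      have h3 : A^2 * ((p:ℝ) * (13*M^2)) ≥ ((p:ℝ)*M)^3 := by
        calc ((p:ℝ)*M)^3 ≤ B^3 := h2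
        _ ≤ A^2 * C := hkey
        _ ≤ A^2 * ((p:ℝ) * (13*M^2)) := mul_le_mul_of_nonneg_left hCle (by positivity)
      have hpos : (0:ℝ) < (p:ℝ) * (13*M^2) := by positivity
      rw [ge_iff_le, ← div_le_iff₀ hpos] at h3
      calc ((p:ℝ))^2 * ((M:ℝ)/13) = ((p:ℝ)*M)^3 / ((p:ℝ) * (13*M^2)) := by
            field_simp
      _ ≤ A^2 := h3
    have h2 : Real.sqrt (((p:ℝ))^2 * ((M:ℝ)/13)) ≤ Real.sqrt (A^2) :=
      Real.sqrt_le_sqrt h1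
    rw [Real.sqrt_sq hA0, Real.sqrt_mul (by positivity), Real.sqrt_sq (le_of_lt hppos)] at h2
    rw [one_div, inv_mul_eq_div, le_div_iff₀ hppos]
    linarith [h2]
  · -- upper bound
    have h1 : A^2 ≤ ((p:ℝ))^2 * (13 * M) := by
      calc A^2 ≤ (p:ℝ) * B := hCS3
      _ = (p:ℝ) * ((p:ℝ) * C2) := by rw [hB]
      _ ≤ (p:ℝ) * ((p:ℝ) * (13 * M)) := by
          apply mul_le_mul_of_nonneg_left _ (le_of_lt hppos)
          exact mul_le_mul_of_nonneg_left hC2le (le_of_lt hppos)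
      _ = ((p:ℝ))^2 * (13 * M) := by ring
    have h2 : Real.sqrt (A^2) ≤ Real.sqrt (((p:ℝ))^2 * (13*M)) := Real.sqrt_le_sqrt h1
    rw [Real.sqrt_sq hA0, Real.sqrt_mul (by positivity), Real.sqrt_sq (le_of_lt hppos)] at h2
    rw [one_div, inv_mul_eq_div, div_le_iff₀ hppos]
    linarith [h2]

lemma exp_eq_ep (p x n : ℕ) :
    Complex.exp (2 * (Real.pi : ℂ) * Complex.I * (x : ℂ) * ((fib n : ℕ) : ℂ) / (p : ℂ))
      = ep p ((x:ℤ) * (fib n : ℤ)) := by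
  rw [ep]
  congr 1
  push_cast
  ring

/-- **Theorem 6 (discrete Littlewood problem for Fibonacci numbers).**
For `0 < γ < 1/3` there are constants `c₁, c₂ > 0` such that for every `ε > 0`
and all sufficiently large `N`, for all but at most `ε·π(N)` primes `p ≤ N` one has
`c₁·N^{γ/2} ≤ (1/p)·∑_{x=0}^{p−1} |∑_{1 ≤ n ≤ N^γ} e^{2πi x F_n / p}| ≤ c₂·N^{γ/2}`. -/
theorem stmt_9 (γ : ℝ) (hγ0 : 0 < γ) (hγ : γ < 1 / 3) :
    ∃ c₁ c₂ : ℝ, 0 < c₁ ∧ 0 < c₂ ∧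
      ∀ ε : ℝ, 0 < ε → ∃ N₀ : ℕ, ∀ N : ℕ, N₀ ≤ N →
        ({p : ℕ | p ≤ N ∧ p.Prime ∧
            ¬ (c₁ * (N : ℝ) ^ (γ / 2) ≤
                (1 / (p : ℝ)) * ∑ x ∈ Finset.range p,
                  ‖∑ n ∈ Finset.Icc 1 ⌊(N : ℝ) ^ γ⌋₊,
                    Complex.exp (2 * (Real.pi : ℂ) * Complex.I * (x : ℂ) *
                      ((Nat.fib n : ℕ) : ℂ) / (p : ℂ))‖ ∧
              (1 / (p : ℝ)) * ∑ x ∈ Finset.range p,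
                  ‖∑ n ∈ Finset.Icc 1 ⌊(N : ℝ) ^ γ⌋₊,
                    Complex.exp (2 * (Real.pi : ℂ) * Complex.I * (x : ℂ) *
                      ((Nat.fib n : ℕ) : ℂ) / (p : ℂ))‖ ≤
                c₂ * (N : ℝ) ^ (γ / 2))}.ncard : ℝ)
          ≤ ε * (N.primeCounting : ℝ) := by
  refine ⟨1/6, 4, by norm_num, by norm_num, ?_⟩
  intro ε hε
  -- choose N₀ from the little-o bound
  have hδ : (0:ℝ) < 1 - 3*γ := by linarith
  have hlo := isLittleO_log_rpow_atTop hδ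
  have hev := hlo.def (show (0:ℝ) < ε/8 by positivity)
  obtain ⟨x₀, hx₀⟩ := Filter.eventually_atTop.1 hev
  refine ⟨max 60 (⌈x₀⌉₊ + 1), ?_⟩
  intro N hN
  have hN60 : 60 ≤ N := le_trans (le_max_left _ _) hN
  have hN1 : (1:ℝ) ≤ N := by exact_mod_cast (by omega : 1 ≤ N)
  have hN0 : (0:ℝ) < N := by linarith
  set M := ⌊(N : ℝ) ^ γ⌋₊ with hMdef
  have hNγ1 : (1:ℝ) ≤ (N:ℝ)^γ := Real.one_le_rpow hN1 (le_of_lt hγ0)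
  have hM1 : 1 ≤ M := by
    rw [hMdef]
    exact Nat.le_floor (by exact_mod_cast hNγ1)
  have hMle : (M:ℝ) ≤ (N:ℝ)^γ := Nat.floor_le (by positivity)
  have hMge : (N:ℝ)^γ / 2 ≤ M := by
    have h1 : (N:ℝ)^γ < M + 1 := Nat.lt_floor_add_one _
    have h2 : (1:ℝ) ≤ (M:ℝ) := by exact_mod_cast hM1
    rcases le_total ((N:ℝ)^γ) 2 with h | h
    · linarith
    · linarith
  -- the bad finset
  set Bad := ((range (N+1)).filter Nat.Prime).filter (fun p : ℕ =>
      M^2 < #((((Icc 1 M ×ˢ Icc 1 M) ×ˢ (Icc 1 M ×ˢ Icc 1 M))).filter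
        fun q => Dz q ≠ 0 ∧ (p:ℤ) ∣ Dz q)) with hBad
  -- subset claim
  have hsub : {p : ℕ | p ≤ N ∧ p.Prime ∧
      ¬ ((1:ℝ)/6 * (N : ℝ) ^ (γ / 2) ≤
          (1 / (p : ℝ)) * ∑ x ∈ Finset.range p,
            ‖∑ n ∈ Finset.Icc 1 M,
              Complex.exp (2 * (Real.pi : ℂ) * Complex.I * (x : ℂ) *
                ((Nat.fib n : ℕ) : ℂ) / (p : ℂ))‖ ∧
        (1 / (p : ℝ)) * ∑ x ∈ Finset.range p,
            ‖∑ n ∈ Finset.Icc 1 M,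
              Complex.exp (2 * (Real.pi : ℂ) * Complex.I * (x : ℂ) *
                ((Nat.fib n : ℕ) : ℂ) / (p : ℂ))‖ ≤
          4 * (N : ℝ) ^ (γ / 2))} ⊆ (Bad : Set ℕ) := by
    intro p hp
    obtain ⟨hpN, hprime, hfail⟩ := hp
    by_contra hnb
    apply hfail
    have hpP : p ∈ (range (N+1)).filter Nat.Prime :=
      mem_filter.2 ⟨mem_range.2 (by omega), hprime⟩
    have hnotbad : ¬ (M^2 < #((((Icc 1 M ×ˢ Icc 1 M) ×ˢ (Icc 1 M ×ˢ Icc 1 M))).filter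
        fun q => Dz q ≠ 0 ∧ (p:ℤ) ∣ Dz q)) := by
      intro hlt
      refine hnb ?_
      rw [hBad]
      exact Finset.mem_coe.2 (mem_filter.2 ⟨hpP, hlt⟩)
    push_neg at hnotbad
    -- C4 bound
    have hC4 : #((((Icc 1 M ×ˢ Icc 1 M) ×ˢ (Icc 1 M ×ˢ Icc 1 M))).filter
        fun q => (p:ℤ) ∣ Dz q) ≤ 13 * M^2 := by
      have hsplit : (((Icc 1 M ×ˢ Icc 1 M) ×ˢ (Icc 1 M ×ˢ Icc 1 M))).filter
          (fun q => (p:ℤ) ∣ Dz q) ⊆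
          ((((Icc 1 M ×ˢ Icc 1 M) ×ˢ (Icc 1 M ×ˢ Icc 1 M))).filter
            (fun q => fib q.2.1 + fib q.2.2 = fib q.1.1 + fib q.1.2)) ∪
          ((((Icc 1 M ×ˢ Icc 1 M) ×ˢ (Icc 1 M ×ˢ Icc 1 M))).filter
            (fun q => Dz q ≠ 0 ∧ (p:ℤ) ∣ Dz q)) := by
        intro q hq
        obtain ⟨hqmem, hdvd⟩ := mem_filter.1 hq
        rw [mem_union]
        by_cases h0 : Dz q = 0
        · refine Or.inl (mem_filter.2 ⟨hqmem, ?_⟩)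
          have := h0
          rw [Dz] at this
          omega
        · exact Or.inr (mem_filter.2 ⟨hqmem, h0, hdvd⟩)
      calc #((((Icc 1 M ×ˢ Icc 1 M) ×ˢ (Icc 1 M ×ˢ Icc 1 M))).filter
            fun q => (p:ℤ) ∣ Dz q) ≤ _ := card_le_card hsplit
        _ ≤ #((((Icc 1 M ×ˢ Icc 1 M) ×ˢ (Icc 1 M ×ˢ Icc 1 M))).filter
            (fun q => fib q.2.1 + fib q.2.2 = fib q.1.1 + fib q.1.2)) +
            #((((Icc 1 M ×ˢ Icc 1 M) ×ˢ (Icc 1 M ×ˢ Icc 1 M))).filter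
            (fun q => Dz q ≠ 0 ∧ (p:ℤ) ∣ Dz q)) := card_union_le _ _
        _ ≤ 12 * M^2 + M^2 := Nat.add_le_add (card_D0_le M) hnotbad
        _ = 13 * M^2 := by ring
    obtain ⟨hlow, hhigh⟩ := good_prime_bound p M hprime.pos hM1 hC4
    have hrw : ∀ x : ℕ, (∑ n ∈ Finset.Icc 1 M,
        Complex.exp (2 * (Real.pi : ℂ) * Complex.I * (x : ℂ) *
          ((Nat.fib n : ℕ) : ℂ) / (p : ℂ))) = ∑ n ∈ Icc 1 M, ep p ((x:ℤ) * (fib n : ℤ)) :=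
      fun x => Finset.sum_congr rfl fun n _ => exp_eq_ep p x n
    have hsum : ∑ x ∈ Finset.range p, ‖∑ n ∈ Finset.Icc 1 M,
        Complex.exp (2 * (Real.pi : ℂ) * Complex.I * (x : ℂ) *
          ((Nat.fib n : ℕ) : ℂ) / (p : ℂ))‖
        = ∑ x ∈ range p, ‖∑ n ∈ Icc 1 M, ep p ((x:ℤ) * (fib n : ℤ))‖ :=
      Finset.sum_congr rfl fun x _ => by rw [hrw x]
    rw [hsum]
    -- now numeric comparisons
    have hsq : (N:ℝ)^(γ/2) * (N:ℝ)^(γ/2) = (N:ℝ)^γ := by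
      rw [← Real.rpow_add hN0]
      ring_nf
    have hγ2nn : (0:ℝ) ≤ (N:ℝ)^(γ/2) := by positivity
    constructor
    · refine le_trans ?_ hlow
      have h1 : ((1:ℝ)/6 * (N:ℝ)^(γ/2))^2 ≤ (M:ℝ)/13 := by
        have he : ((1:ℝ)/6 * (N:ℝ)^(γ/2))^2 = ((N:ℝ)^(γ/2) * (N:ℝ)^(γ/2))/36 := by ring
        rw [he, hsq]
        linarith
      calc (1:ℝ)/6 * (N:ℝ)^(γ/2) = Real.sqrt (((1:ℝ)/6 * (N:ℝ)^(γ/2))^2) :=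
            (Real.sqrt_sq (by positivity)).symm
        _ ≤ Real.sqrt ((M:ℝ)/13) := Real.sqrt_le_sqrt h1
    · refine le_trans hhigh ?_
      have h1 : 13 * (M:ℝ) ≤ (4 * (N:ℝ)^(γ/2))^2 := by
        have he : (4 * (N:ℝ)^(γ/2))^2 = 16 * ((N:ℝ)^(γ/2) * (N:ℝ)^(γ/2)) := by ring
        rw [he, hsq]
        linarith
      calc Real.sqrt (13 * (M:ℝ)) ≤ Real.sqrt ((4 * (N:ℝ)^(γ/2))^2) := Real.sqrt_le_sqrt h1
        _ = 4 * (N:ℝ)^(γ/2) := Real.sqrt_sq (by positivity)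
  -- cardinality bound
  have hcard1 := Set.ncard_le_ncard hsub Bad.finite_toSet
  rw [Set.ncard_coe_finset] at hcard1
  have hcard2 : #Bad ≤ 2 * M^3 := by
    rw [hBad]
    exact card_bad_le N M hM1
  have hM3 : ((2 * M^3 : ℕ) : ℝ) ≤ 2 * (N:ℝ)^(3*γ) := by
    have h1 : ((M:ℝ))^3 ≤ ((N:ℝ)^γ)^3 := by
      apply pow_le_pow_left₀ (by positivity) hMle
    have h2 : ((N:ℝ)^γ)^(3:ℕ) = (N:ℝ)^(3*γ) := by
      rw [← Real.rpow_natCast ((N:ℝ)^γ) 3, ← Real.rpow_mul hN0.le]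
      norm_num
      ring_nf
    push_cast
    rw [← h2]
    linarith
  have hfinal : 2 * (N:ℝ)^(3*γ) ≤ ε * (N.primeCounting : ℝ) := by
    have hNx : x₀ ≤ (N:ℝ) := by
      have h1 : ⌈x₀⌉₊ + 1 ≤ N := le_trans (le_max_right _ _) hN
      have h2 : x₀ ≤ (⌈x₀⌉₊ : ℝ) := Nat.le_ceil x₀
      have h3 : ((⌈x₀⌉₊ : ℕ) : ℝ) ≤ (N:ℝ) := by exact_mod_cast (by omega : ⌈x₀⌉₊ ≤ N)
      linarith
    have hl := hx₀ N hNx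
    have hlognn : (0:ℝ) ≤ Real.log N := Real.log_nonneg hN1
    rw [Real.norm_eq_abs, Real.norm_eq_abs, _root_.abs_of_nonneg hlognn,
      _root_.abs_of_nonneg (by positivity : (0:ℝ) ≤ (N:ℝ)^(1-3*γ))] at hl
    have hprod : (N:ℝ)^(3*γ) * (N:ℝ)^(1-3*γ) = N := by
      rw [← Real.rpow_add hN0]
      norm_num
    have h8 : 8 * (N:ℝ)^(3*γ) * Real.log N ≤ ε * N := by
      calc 8 * (N:ℝ)^(3*γ) * Real.log N
          ≤ 8 * (N:ℝ)^(3*γ) * (ε/8 * (N:ℝ)^(1-3*γ)) := by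
            apply mul_le_mul_of_nonneg_left hl (by positivity)
        _ = ε * ((N:ℝ)^(3*γ) * (N:ℝ)^(1-3*γ)) := by ring
        _ = ε * N := by rw [hprod]
    have hp4 := pi_lower N hN60
    have hεp : ε * (N:ℝ) ≤ ε * (4 * (N.primeCounting : ℝ) * Real.log N) :=
      mul_le_mul_of_nonneg_left hp4 hε.le
    have hcomb := h8.trans hεp
    have hlogpos : (0:ℝ) < Real.log N :=
      Real.log_pos (by exact_mod_cast (by omega : 1 < N))
    nlinarith [hcomb, hlogpos,
      mul_pos (by positivity : (0:ℝ) < (N:ℝ)^(3*γ)) hlogpos]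
  calc ({p : ℕ | p ≤ N ∧ p.Prime ∧
      ¬ ((1:ℝ)/6 * (N : ℝ) ^ (γ / 2) ≤
          (1 / (p : ℝ)) * ∑ x ∈ Finset.range p,
            ‖∑ n ∈ Finset.Icc 1 M,
              Complex.exp (2 * (Real.pi : ℂ) * Complex.I * (x : ℂ) *
                ((Nat.fib n : ℕ) : ℂ) / (p : ℂ))‖ ∧
        (1 / (p : ℝ)) * ∑ x ∈ Finset.range p,
            ‖∑ n ∈ Finset.Icc 1 M,
              Complex.exp (2 * (Real.pi : ℂ) * Complex.I * (x : ℂ) *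
                ((Nat.fib n : ℕ) : ℂ) / (p : ℂ))‖ ≤
          4 * (N : ℝ) ^ (γ / 2))}.ncard : ℝ)
      ≤ (#Bad : ℝ) := by exact_mod_cast hcard1
    _ ≤ ((2 * M^3 : ℕ) : ℝ) := by exact_mod_cast hcard2
    _ ≤ 2 * (N:ℝ)^(3*γ) := hM3
    _ ≤ ε * (N.primeCounting : ℝ) := hfinal
end

section
/- Let p be an odd prime and let n > n' ≥ 1 be integers with 2(n + n') < z(p). Then F_{2n} ≢ F_{2n'} (mod p). In particular, the Fibonacci numbers F_{2n} (mod p) are pairwise distinct as n ranges over any set of positive integers n with 4n < z(p). -/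
open Nat

/-- The order of appearance `z(k)`: the least positive integer `ℓ`
such that `k` divides the Fibonacci number `F_ℓ`. -/
noncomputable def orderOfAppearance (k : ℕ) : ℕ :=
  sInf {ℓ : ℕ | 0 < ℓ ∧ k ∣ Nat.fib ℓ}

lemma fib_sub_aux (k : ℕ) : ∀ j : ℕ, ((Nat.fib j : ℤ)) =
    (-1)^k * (Nat.fib (j+k) * Nat.fib (k+1) - Nat.fib (j+k+1) * Nat.fib k) := by
  induction k with
  | zero => intro j; simp
  | succ k ih =>
    intro j
    have h1 := ih j
    have h2 : (Nat.fib (j+k+2) : ℤ) = Nat.fib (j+k+1) + Nat.fib (j+k) := by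
      have := Nat.fib_add_two (n := j + k); push_cast [this]; ring
    have h3 : (Nat.fib (k+2) : ℤ) = Nat.fib (k+1) + Nat.fib k := by
      have := Nat.fib_add_two (n := k); push_cast [this]; ring
    have : j + (k+1) = j + k + 1 := by ring
    rw [this, show j + k + 1 + 1 = j + k + 2 from rfl, h2, h3, h1]
    ring

lemma fib_diff_even (j k' : ℕ) (he : Even (k'+1)) :
    (Nat.fib (j + 2*(k'+1)) : ℤ) - Nat.fib j =
      Nat.fib (k'+1) * (2 * Nat.fib (j + k' + 2) - Nat.fib (j + k' + 1)) := by
  have hadd := Nat.fib_add (j + k' + 1) k'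
  have hs := fib_sub_aux (k'+1) j
  have h3 : (Nat.fib (k'+2) : ℤ) = Nat.fib (k'+1) + Nat.fib k' := by
    push_cast [Nat.fib_add_two (n := k')]; ring
  have hneg : ((-1 : ℤ))^(k'+1) = 1 := he.neg_one_pow
  rw [show j + 2*(k'+1) = j + k' + 1 + k' + 1 from by ring, hadd]
  rw [show j + (k'+1) = j + k' + 1 from by ring, show j + k' + 1 + 1 = j + k' + 2 from rfl,
    show k' + 1 + 1 = k' + 2 from rfl, hneg, one_mul] at hs
  push_cast
  rw [hs, h3]
  ring

lemma fib_diff_odd (j k' : ℕ) (he : ¬ Even (k'+1)) :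
    (Nat.fib (j + 2*(k'+1)) : ℤ) - Nat.fib j =
      Nat.fib (j + k' + 1) * (2 * Nat.fib (k' + 2) - Nat.fib (k' + 1)) := by
  have hadd := Nat.fib_add (j + k' + 1) k'
  have hs := fib_sub_aux (k'+1) j
  have h3 : (Nat.fib (k'+2) : ℤ) = Nat.fib (k'+1) + Nat.fib k' := by
    push_cast [Nat.fib_add_two (n := k')]; ring
  have hneg : ((-1 : ℤ))^(k'+1) = -1 := (Nat.not_even_iff_odd.mp he).neg_one_pow
  rw [show j + 2*(k'+1) = j + k' + 1 + k' + 1 from by ring, hadd]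
  rw [show j + (k'+1) = j + k' + 1 from by ring, show j + k' + 1 + 1 = j + k' + 2 from rfl,
    show k' + 1 + 1 = k' + 2 from rfl, hneg, neg_one_mul] at hs
  push_cast
  rw [hs, h3]
  ring

lemma fib_two_mul_int (m : ℕ) : (Nat.fib (2*m) : ℤ) = Nat.fib m * (2 * Nat.fib (m+1) - Nat.fib m) := by
  have h := Nat.fib_two_mul m
  have hle : Nat.fib m ≤ 2 * Nat.fib (m+1) :=
    le_trans (Nat.fib_le_fib_succ) (by omega)
  push_cast [h, Nat.sub_add_cancel, hle]
  ring

/-- **Distinctness of even-indexed Fibonacci numbers modulo `p`.**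
Let `p` be an odd prime and `n > n' ≥ 1` integers with `2(n + n') < z(p)`; then
`F_{2n} ≢ F_{2n'} (mod p)`. In particular the residues `F_{2n} (mod p)` are
pairwise distinct as `n` ranges over positive integers with `4n < z(p)`. -/
theorem stmt_10 (p : ℕ) (hp : p.Prime) (hodd : Odd p) :
    (∀ n n' : ℕ, 1 ≤ n' → n' < n → 2 * (n + n') < orderOfAppearance p →
      ¬ (Nat.fib (2 * n) ≡ Nat.fib (2 * n') [MOD p])) ∧
    (∀ n m : ℕ, 1 ≤ n → 1 ≤ m →
      4 * n < orderOfAppearance p → 4 * m < orderOfAppearance p →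
      Nat.fib (2 * n) ≡ Nat.fib (2 * m) [MOD p] → n = m) := by
  have hmin : ∀ ℓ : ℕ, 0 < ℓ → p ∣ Nat.fib ℓ → orderOfAppearance p ≤ ℓ := by
    intro ℓ h1 h2
    exact Nat.sInf_le ⟨h1, h2⟩
  have hpz : Prime (p : ℤ) := Int.prime_iff_natAbs_prime.mpr (by simpa using hp)
  have main : ∀ n n' : ℕ, 1 ≤ n' → n' < n → 2 * (n + n') < orderOfAppearance p →
      ¬ (Nat.fib (2 * n) ≡ Nat.fib (2 * n') [MOD p]) := by
    intro n n' hn' hlt hz hmod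
    have hdvd : (p : ℤ) ∣ (Nat.fib (2*n) : ℤ) - Nat.fib (2*n') :=
      (Nat.modEq_iff_dvd.mp hmod.symm)
    set k' : ℕ := n - n' - 1 with hk'
    have hjk : 2*n = 2*n' + 2*(k'+1) := by omega
    have hm : 2*n' + k' + 1 = n + n' := by omega
    by_cases he : Even (k'+1)
    · have := fib_diff_even (2*n') k' he
      rw [show 2*n' + k' + 2 = (n+n') + 1 from by omega, hm] at this
      rw [hjk, this] at hdvd
      rcases hpz.dvd_mul.mp hdvd with h | h
      · have : p ∣ Nat.fib (k'+1) := by exact_mod_cast h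
        have := hmin (k'+1) (by omega) this
        omega
      · have h2 : (p:ℤ) ∣ Nat.fib (2*(n+n')) := by
          rw [fib_two_mul_int]
          exact Dvd.dvd.mul_left h _
        have : p ∣ Nat.fib (2*(n+n')) := by exact_mod_cast h2
        have := hmin (2*(n+n')) (by omega) this
        omega
    · have := fib_diff_odd (2*n') k' he
      rw [hm] at this
      rw [hjk, this] at hdvd
      rcases hpz.dvd_mul.mp hdvd with h | h
      · have : p ∣ Nat.fib (n+n') := by exact_mod_cast h
        have := hmin (n+n') (by omega) this
        omega
      · have h2 : (p:ℤ) ∣ Nat.fib (2*(k'+1)) := by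
          rw [fib_two_mul_int]
          exact Dvd.dvd.mul_left h _
        have : p ∣ Nat.fib (2*(k'+1)) := by exact_mod_cast h2
        have := hmin (2*(k'+1)) (by omega) this
        omega
  refine ⟨main, ?_⟩
  intro n m hn hm hzn hzm hmod
  by_contra hne
  rcases Nat.lt_or_ge n m with h | h
  · exact main m n hn h (by omega) hmod.symm
  · exact main n m hm (by omega) (by omega) hmod
end

section
/- Let p be a prime and let A, B be subsets of the finite field 𝔽_p with |A|·|B| > 2p. Then every element of 𝔽_p can be written as a₁·b₁ + a₂·b₂ + … + a₈·b₈ with a₁, …, a₈ ∈ A and b₁, …, b₈ ∈ B; that is, the 8-fold sumset of the product set A·B equals 𝔽_p. -/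
open Finset

namespace GlibichukAux

variable {p : ℕ}

/-- The sumset `A + ξ·C` as a finset image. -/
def Sset (A C : Finset (ZMod p)) (ξ : ZMod p) : Finset (ZMod p) :=
  (A ×ˢ C).image (fun v => v.1 + ξ * v.2)

/-- Additive energy between `A` and `ξ·C`. -/
def En (A C : Finset (ZMod p)) (ξ : ZMod p) : ℕ :=
  (((A ×ˢ C) ×ˢ (A ×ˢ C)).filter
    (fun v => v.1.1 + ξ * v.1.2 = v.2.1 + ξ * v.2.2)).card

lemma en_neg (A C : Finset (ZMod p)) (ξ : ZMod p) : En A C (-ξ) = En A C ξ := by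
  classical
  unfold En
  apply Finset.card_nbij' (fun v => ((v.1.1, v.2.2), (v.2.1, v.1.2)))
    (fun v => ((v.1.1, v.2.2), (v.2.1, v.1.2)))
  · intro v hv
    simp only [mem_coe, mem_filter, mem_product] at hv ⊢
    refine ⟨⟨⟨hv.1.1.1, hv.1.2.2⟩, ⟨hv.1.2.1, hv.1.1.2⟩⟩, ?_⟩
    have h := hv.2
    linear_combination h
  · intro v hv
    simp only [mem_coe, mem_filter, mem_product] at hv ⊢
    refine ⟨⟨⟨hv.1.1.1, hv.1.2.2⟩, ⟨hv.1.2.1, hv.1.1.2⟩⟩, ?_⟩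
    have h := hv.2
    linear_combination h
  · intro v _; rfl
  · intro v _; rfl

lemma count_xi [Fact p.Prime] (a b a' b' : ZMod p) :
    ((Finset.univ : Finset (ZMod p)).filter (fun ξ => a + ξ * b = a' + ξ * b')).card
      ≤ if b = b' then (if a = a' then p else 0) else 1 := by
  haveI : NeZero p := ⟨(Fact.out : p.Prime).pos.ne'⟩
  split_ifs with hb ha
  · exact le_trans (card_filter_le _ _) (by rw [card_univ, ZMod.card])
  · subst hb
    have : ((Finset.univ : Finset (ZMod p)).filter (fun ξ => a + ξ * b = a' + ξ * b)) = ∅ := by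
      apply filter_eq_empty_iff.mpr
      intro ξ _
      intro hcon
      exact ha (by linear_combination hcon)
    rw [this]
    simp
  · apply card_le_one.mpr
    intro ξ₁ h₁ ξ₂ h₂
    simp only [mem_filter] at h₁ h₂
    have hbb : b - b' ≠ 0 := sub_ne_zero.mpr hb
    have : (ξ₁ - ξ₂) * (b - b') = 0 := by linear_combination h₁.2 - h₂.2
    rcases mul_eq_zero.mp this with h | h
    · exact sub_eq_zero.mp h
    · exact absurd h hbb

lemma sum_en_le [Fact p.Prime] (A C : Finset (ZMod p)) :
    ∑ ξ : ZMod p, En A C ξ ≤ A.card * C.card * (p + A.card * (C.card - 1)) := by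
  classical
  have h1 : ∀ ξ : ZMod p, En A C ξ =
      ∑ q ∈ (A ×ˢ C) ×ˢ (A ×ˢ C),
        (if q.1.1 + ξ * q.1.2 = q.2.1 + ξ * q.2.2 then 1 else 0) := by
    intro ξ
    rw [En, card_filter]
  calc ∑ ξ : ZMod p, En A C ξ
      = ∑ q ∈ (A ×ˢ C) ×ˢ (A ×ˢ C), ∑ ξ : ZMod p,
          (if q.1.1 + ξ * q.1.2 = q.2.1 + ξ * q.2.2 then 1 else 0) := by
        simp_rw [h1]
        rw [Finset.sum_comm]
    _ ≤ ∑ q ∈ (A ×ˢ C) ×ˢ (A ×ˢ C),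
          (if q.1.2 = q.2.2 then (if q.1.1 = q.2.1 then p else 0) else 1) := by
        apply Finset.sum_le_sum
        intro q _
        rw [← card_filter]
        exact count_xi q.1.1 q.1.2 q.2.1 q.2.2
    _ = A.card * C.card * (p + A.card * (C.card - 1)) := by
        rw [Finset.sum_product]
        have hinner : ∀ u ∈ A ×ˢ C,
            (∑ v ∈ A ×ˢ C,
              (if u.2 = v.2 then (if u.1 = v.1 then p else 0) else 1))
            = p + A.card * (C.card - 1) := by
          intro u hu
          rw [mem_product] at hu
          rw [Finset.sum_product]
          have hrow : ∀ a' ∈ A,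
              (∑ b' ∈ C, (if u.2 = b' then (if u.1 = a' then p else 0) else 1))
              = (if u.1 = a' then p else 0) + (C.card - 1) := by
            intro a' _
            rw [Finset.sum_eq_sum_sdiff_singleton_add hu.2]
            have hrest : ∑ b' ∈ C \ {u.2},
                (if u.2 = b' then (if u.1 = a' then p else 0) else 1) = C.card - 1 := by
              rw [Finset.sum_congr rfl (fun b' hb' => ?_), Finset.sum_const, smul_eq_mul, mul_one,
                Finset.card_sdiff_of_subset (singleton_subset_iff.mpr hu.2), card_singleton]
              rw [mem_sdiff, mem_singleton] at hb'
              rw [if_neg (fun hcon => hb'.2 hcon.symm)]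
            rw [hrest, if_pos rfl]
            omega
          rw [Finset.sum_congr rfl hrow, Finset.sum_add_distrib, Finset.sum_ite_eq,
            if_pos hu.1, Finset.sum_const, smul_eq_mul]
        rw [Finset.sum_congr rfl hinner, Finset.sum_const, smul_eq_mul, card_product]

lemma cs_bound (A C : Finset (ZMod p)) (ξ : ZMod p) :
    (A.card * C.card) ^ 2 ≤ (Sset A C ξ).card * En A C ξ := by
  classical
  set g : ZMod p × ZMod p → ZMod p := fun v => v.1 + ξ * v.2 with hg
  set r : ZMod p → ℕ := fun x => ((A ×ˢ C).filter (fun v => g v = x)).card with hr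
  have hmaps : ∀ v ∈ A ×ˢ C, g v ∈ Sset A C ξ := fun v hv => mem_image_of_mem g hv
  have hK : A.card * C.card = ∑ x ∈ Sset A C ξ, r x := by
    rw [← card_product, Finset.card_eq_sum_card_fiberwise hmaps]
  have hE : En A C ξ = ∑ x ∈ Sset A C ξ, r x ^ 2 := by
    rw [En]
    have hmaps2 : ∀ v ∈ ((A ×ˢ C) ×ˢ (A ×ˢ C)).filter
        (fun v => v.1.1 + ξ * v.1.2 = v.2.1 + ξ * v.2.2),
        g v.1 ∈ Sset A C ξ := by
      intro v hv
      rw [mem_filter, mem_product] at hv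
      exact hmaps v.1 hv.1.1
    rw [Finset.card_eq_sum_card_fiberwise hmaps2]
    apply Finset.sum_congr rfl
    intro x _
    have hset : (((A ×ˢ C) ×ˢ (A ×ˢ C)).filter
          (fun v => v.1.1 + ξ * v.1.2 = v.2.1 + ξ * v.2.2)).filter (fun v => g v.1 = x)
        = ((A ×ˢ C).filter (fun v => g v = x)) ×ˢ ((A ×ˢ C).filter (fun v => g v = x)) := by
      ext v
      simp only [mem_filter, mem_product, hg]
      constructor
      · rintro ⟨⟨⟨h1, h2⟩, h3⟩, h4⟩
        exact ⟨⟨h1, h4⟩, h2, h3 ▸ h4⟩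
      · rintro ⟨⟨h1, h2⟩, h3, h4⟩
        exact ⟨⟨⟨h1, h3⟩, h2.trans h4.symm⟩, h2⟩
    rw [hset, card_product, sq]
  have hcs := Finset.sum_mul_sq_le_sq_mul_sq (Sset A C ξ) (fun _ => (1 : ℕ)) r
  simp only [one_mul, one_pow] at hcs
  rw [Finset.sum_const, smul_eq_mul, mul_one] at hcs
  rw [hK, hE]
  exact hcs

lemma en_pos (A C : Finset (ZMod p)) (ξ : ZMod p) (hA : A.Nonempty) (hC : C.Nonempty) :
    0 < En A C ξ := by
  classical
  obtain ⟨a, ha⟩ := hA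
  obtain ⟨c, hc⟩ := hC
  apply card_pos.mpr
  exact ⟨((a, c), (a, c)), by simp [mem_filter, mem_product, ha, hc]⟩

lemma arith (a b P : ℕ) (ha : 1 ≤ a) (hb : 1 ≤ b) (hP : 1 ≤ P) (hK : P + 1 ≤ a * b) :
    (P + 1) * (a * b * (P + a * (b - 1))) ≤ 2 * (a * b) ^ 2 * P := by
  obtain ⟨b₁, rfl⟩ : ∃ b₁, b = b₁ + 1 := ⟨b - 1, by omega⟩
  have hstep : (P + 1) * (P + a * b₁) ≤ 2 * (a * (b₁ + 1)) * P := by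
    zify at hK ha hP ⊢
    have h2 : ((a : ℤ) * b₁ + a - (P + 1)) * (P - 1) ≥ 0 := by
      apply mul_nonneg
      · nlinarith [hK]
      · linarith
    have h3 : ((a : ℤ) - 1) * (P + 1) ≥ 0 := by
      apply mul_nonneg <;> linarith
    nlinarith [h2, h3]
  calc (P + 1) * (a * (b₁ + 1) * (P + a * ((b₁ + 1) - 1)))
      = (a * (b₁ + 1)) * ((P + 1) * (P + a * b₁)) := by
        simp only [Nat.add_sub_cancel]
        ring
    _ ≤ (a * (b₁ + 1)) * (2 * (a * (b₁ + 1)) * P) :=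
        Nat.mul_le_mul_left _ hstep
    _ = 2 * (a * (b₁ + 1)) ^ 2 * P := by ring

lemma exists_xi [Fact p.Prime] (A C : Finset (ZMod p))
    (hK : p + 1 ≤ A.card * C.card) :
    ∃ ξ : ZMod p, p + 1 ≤ 2 * (Sset A C ξ).card ∧ p + 1 ≤ 2 * (Sset A C (-ξ)).card := by
  classical
  haveI : NeZero p := ⟨(Fact.out : p.Prime).pos.ne'⟩
  have hp1 : 1 ≤ p := (Fact.out : p.Prime).pos
  have hA : 1 ≤ A.card := by
    rcases Nat.eq_zero_or_pos A.card with h | h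
    · rw [h, zero_mul] at hK; omega
    · exact h
  have hC : 1 ≤ C.card := by
    rcases Nat.eq_zero_or_pos C.card with h | h
    · rw [h, mul_zero] at hK; omega
    · exact h
  -- find ξ₀ with p * En ξ₀ ≤ T
  set T : ℕ := A.card * C.card * (p + A.card * (C.card - 1)) with hT
  have hmin : ∃ ξ : ZMod p, p * En A C ξ ≤ T := by
    by_contra hcon
    push_neg at hcon
    have hlb : ∀ ξ : ZMod p, T + 1 ≤ p * En A C ξ := fun ξ => hcon ξ
    have h1 : (p : ℕ) * (T + 1) ≤ ∑ ξ : ZMod p, p * En A C ξ := by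
      calc (p : ℕ) * (T + 1) = ∑ _ξ : ZMod p, (T + 1) := by
            rw [Finset.sum_const, card_univ, ZMod.card, smul_eq_mul]
        _ ≤ ∑ ξ : ZMod p, p * En A C ξ := Finset.sum_le_sum (fun ξ _ => hlb ξ)
    rw [← Finset.mul_sum] at h1
    have h2 := sum_en_le A C
    have h3 : p * (T + 1) ≤ p * T := le_trans h1 (Nat.mul_le_mul_left p h2)
    rw [Nat.mul_add, Nat.mul_one] at h3
    omega
  obtain ⟨ξ₀, hξ₀⟩ := hmin
  have key : ∀ η : ZMod p, En A C η = En A C ξ₀ → p + 1 ≤ 2 * (Sset A C η).card := by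
    intro η hη
    have hEpos : 0 < En A C ξ₀ :=
      en_pos A C ξ₀ (card_pos.mp hA) (card_pos.mp hC)
    have hcs := cs_bound A C η
    rw [hη] at hcs
    -- (p+1) * (p * En ξ₀) ≤ (p+1) * T ≤ 2 K² p ≤ 2 * (S.card * En) * p
    have c1 : (p + 1) * (p * En A C ξ₀) ≤ (p + 1) * T :=
      Nat.mul_le_mul_left _ hξ₀
    have c2 : (p + 1) * T ≤ 2 * (A.card * C.card) ^ 2 * p :=
      arith A.card C.card p hA hC hp1 hK
    have c3 : 2 * (A.card * C.card) ^ 2 * p ≤ 2 * ((Sset A C η).card * En A C ξ₀) * p :=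
      Nat.mul_le_mul_right _ (Nat.mul_le_mul_left _ hcs)
    have call : (p + 1) * (En A C ξ₀ * p) ≤ (2 * (Sset A C η).card) * (En A C ξ₀ * p) := by
      calc (p + 1) * (En A C ξ₀ * p) = (p + 1) * (p * En A C ξ₀) := by ring
        _ ≤ 2 * ((Sset A C η).card * En A C ξ₀) * p := le_trans c1 (le_trans c2 c3)
        _ = (2 * (Sset A C η).card) * (En A C ξ₀ * p) := by ring
    exact Nat.le_of_mul_le_mul_right call (Nat.mul_pos hEpos hp1)
  exact ⟨ξ₀, key ξ₀ rfl, key (-ξ₀) (en_neg A C ξ₀)⟩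

lemma inter_nonempty [NeZero p] {X Z : Finset (ZMod p)} (h : p < X.card + Z.card) :
    ∃ x, x ∈ X ∧ x ∈ Z := by
  classical
  have h1 := Finset.card_union_add_card_inter X Z
  have h2 : (X ∪ Z).card ≤ p := by
    have h4 := Finset.card_le_univ (X ∪ Z)
    rwa [ZMod.card] at h4
  have h3 : 0 < (X ∩ Z).card := by omega
  obtain ⟨x, hx⟩ := card_pos.mp h3
  exact ⟨x, mem_inter.mp hx⟩

lemma cover [NeZero p] {Y : Finset (ZMod p)} (hY : p + 1 ≤ 2 * Y.card) (c : ZMod p) :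
    ∃ y₁ ∈ Y, ∃ y₂ ∈ Y, y₁ + y₂ = c := by
  classical
  set Z : Finset (ZMod p) := Y.image (fun y => c - y) with hZ
  have hZcard : Z.card = Y.card := by
    apply Finset.card_image_of_injective
    intro y₁ y₂ hcon
    have : c - y₁ = c - y₂ := hcon
    linear_combination -this
  obtain ⟨x, hxY, hxZ⟩ := inter_nonempty (X := Y) (Z := Z) (by omega)
  obtain ⟨y₂, hy₂, hxy⟩ := Finset.mem_image.mp hxZ
  exact ⟨x, hxY, y₂, hy₂, by linear_combination -hxy⟩

theorem main (hp : p.Prime) (A B : Finset (ZMod p))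
    (h : 2 * p < A.card * B.card) :
    ∀ c : ZMod p, ∃ a b : Fin 8 → ZMod p,
      (∀ i, a i ∈ A) ∧ (∀ i, b i ∈ B) ∧ ∑ i, a i * b i = c := by
  classical
  haveI : Fact p.Prime := ⟨hp⟩
  haveI : NeZero p := ⟨hp.pos.ne'⟩
  intro c
  set B₀ : Finset (ZMod p) := B.filter (fun b => -b ∈ B) with hB₀
  set B₁ : Finset (ZMod p) := B.filter (fun b => ¬(-b ∈ B)) with hB₁
  have hsplit : B₀.card + B₁.card = B.card :=
    Finset.card_filter_add_card_filter_not _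
  have hcases : p + 1 ≤ A.card * B₀.card ∨ p + 1 ≤ A.card * B₁.card := by
    by_contra hcon
    push_neg at hcon
    have h1 : A.card * B₀.card + A.card * B₁.card = A.card * B.card := by
      rw [← Nat.mul_add, hsplit]
    omega
  rcases hcases with hK | hK
  · -- symmetric case
    have hsub : B₀ ⊆ B := Finset.filter_subset _ _
    have hsym : ∀ b ∈ B₀, -b ∈ B₀ := by
      intro b hb
      rw [hB₀, mem_filter] at hb ⊢
      exact ⟨hb.2, by rw [neg_neg]; exact hb.1⟩
    obtain ⟨ξ, hS, -⟩ := exists_xi A B₀ hK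
    -- collision
    have hcard : ((Finset.univ : Finset (ZMod p))).card < (A ×ˢ B₀).card := by
      rw [card_univ, ZMod.card, card_product]
      omega
    obtain ⟨u, hu, v, hv, huv, hfe⟩ :=
      Finset.exists_ne_map_eq_of_card_lt_of_maps_to hcard
        (f := fun w => w.1 + ξ * w.2) (fun w _ => Finset.mem_univ _)
    rw [mem_product] at hu hv
    set d : ZMod p := v.2 - u.2 with hd
    set e : ZMod p := u.1 - v.1 with he
    have hdne : d ≠ 0 := by
      intro hcon
      have h2 : v.2 = u.2 := by rw [hd] at hcon; linear_combination hcon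
      have h1 : u.1 = v.1 := by
        have := hfe
        rw [h2] at this
        exact add_right_cancel this
      exact huv (Prod.ext h1 h2.symm)
    have hed : e = ξ * d := by
      rw [he, hd]
      linear_combination hfe
    -- Y = image of (a, b) ↦ a * d + e * b over A ×ˢ B₀
    set Y : Finset (ZMod p) := (A ×ˢ B₀).image (fun w => w.1 * d + e * w.2) with hY
    have hYeq : Y = (Sset A B₀ ξ).image (fun x => d * x) := by
      rw [hY, Sset, Finset.image_image]
      apply Finset.image_congr
      intro w _
      simp only [Function.comp_apply]
      rw [hed]; ring
    have hYcard : Y.card = (Sset A B₀ ξ).card := by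
      rw [hYeq]
      exact Finset.card_image_of_injective _ (mul_right_injective₀ hdne)
    obtain ⟨y₁, hy₁, y₂, hy₂, hysum⟩ := cover (by omega : p + 1 ≤ 2 * Y.card) c
    rw [hY, Finset.mem_image] at hy₁ hy₂
    obtain ⟨w₁, hw₁, hw₁e⟩ := hy₁
    obtain ⟨w₂, hw₂, hw₂e⟩ := hy₂
    rw [mem_product] at hw₁ hw₂
    refine ⟨![w₁.1, w₁.1, u.1, v.1, w₂.1, w₂.1, u.1, v.1],
            ![v.2, -u.2, w₁.2, -w₁.2, v.2, -u.2, w₂.2, -w₂.2], ?_, ?_, ?_⟩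
    · intro i
      fin_cases i <;> first | exact hw₁.1 | exact hw₂.1 | exact hu.1 | exact hv.1
    · intro i
      fin_cases i <;>
        first
          | exact hsub hv.2
          | exact hsub (hsym _ hu.2)
          | exact hsub hw₁.2
          | exact hsub (hsym _ hw₁.2)
          | exact hsub hw₂.2
          | exact hsub (hsym _ hw₂.2)
    · have hsum : (w₁.1 * d + e * w₁.2) + (w₂.1 * d + e * w₂.2) = c := by
        rw [hw₁e, hw₂e]; exact hysum
      rw [hd, he] at hsum
      calc (∑ i, ![w₁.1, w₁.1, u.1, v.1, w₂.1, w₂.1, u.1, v.1] i *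
              ![v.2, -u.2, w₁.2, -w₁.2, v.2, -u.2, w₂.2, -w₂.2] i)
          = w₁.1 * v.2 + w₁.1 * (-u.2) + u.1 * w₁.2 + v.1 * (-w₁.2)
            + w₂.1 * v.2 + w₂.1 * (-u.2) + u.1 * w₂.2 + v.1 * (-w₂.2) := by
            rw [Fin.sum_univ_eight]; rfl
        _ = c := by linear_combination hsum
  · -- antisymmetric case
    have hsub : B₁ ⊆ B := Finset.filter_subset _ _
    have hanti : ∀ b₁ ∈ B₁, ∀ b₂ ∈ B₁, b₁ + b₂ ≠ 0 := by
      intro b₁ hb₁ b₂ hb₂ hcon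
      rw [hB₁, mem_filter] at hb₁ hb₂
      have : -b₁ = b₂ := by linear_combination -hcon
      exact hb₁.2 (this ▸ hb₂.1)
    obtain ⟨ξ, hSp, hSm⟩ := exists_xi A B₁ hK
    -- intersection: U ∩ (-U) ≠ ∅ where U = Sset A B₁ (-ξ)
    set U : Finset (ZMod p) := Sset A B₁ (-ξ) with hU
    set Z : Finset (ZMod p) := U.image (fun x => -x) with hZ
    have hZcard : Z.card = U.card := Finset.card_image_of_injective _ neg_injective
    obtain ⟨x, hxU, hxZ⟩ := inter_nonempty (X := U) (Z := Z) (by omega)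
    obtain ⟨w₅, hw₅, hw₅e⟩ := Finset.mem_image.mp hxU
    obtain ⟨xneg, hxnegU, hxnege⟩ := Finset.mem_image.mp hxZ
    obtain ⟨w₆, hw₆, hw₆e⟩ := Finset.mem_image.mp hxnegU
    rw [mem_product] at hw₅ hw₆
    -- x = w₅.1 - ξ w₅.2 and x = -(w₆.1 - ξ w₆.2)
    set s : ZMod p := w₅.2 + w₆.2 with hs
    set t : ZMod p := w₅.1 + w₆.1 with ht
    have hsne : s ≠ 0 := hanti _ hw₅.2 _ hw₆.2
    have hts : t = ξ * s := by
      rw [ht, hs]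
      have h5 : w₅.1 + (-ξ) * w₅.2 = x := hw₅e
      have h6 : -(w₆.1 + (-ξ) * w₆.2) = x := by rw [hw₆e]; exact hxnege
      linear_combination h5 - h6
    set Y : Finset (ZMod p) := (A ×ˢ B₁).image (fun w => w.1 * s + t * w.2) with hY
    have hYeq : Y = (Sset A B₁ ξ).image (fun x => s * x) := by
      rw [hY, Sset, Finset.image_image]
      apply Finset.image_congr
      intro w _
      simp only [Function.comp_apply]
      rw [hts]; ring
    have hYcard : Y.card = (Sset A B₁ ξ).card := by
      rw [hYeq]
      exact Finset.card_image_of_injective _ (mul_right_injective₀ hsne)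
    obtain ⟨y₁, hy₁, y₂, hy₂, hysum⟩ := cover (by omega : p + 1 ≤ 2 * Y.card) c
    rw [hY, Finset.mem_image] at hy₁ hy₂
    obtain ⟨w₁, hw₁, hw₁e⟩ := hy₁
    obtain ⟨w₂, hw₂, hw₂e⟩ := hy₂
    rw [mem_product] at hw₁ hw₂
    refine ⟨![w₁.1, w₁.1, w₅.1, w₆.1, w₂.1, w₂.1, w₅.1, w₆.1],
            ![w₅.2, w₆.2, w₁.2, w₁.2, w₅.2, w₆.2, w₂.2, w₂.2], ?_, ?_, ?_⟩
    · intro i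
      fin_cases i <;> first | exact hw₁.1 | exact hw₂.1 | exact hw₅.1 | exact hw₆.1
    · intro i
      fin_cases i <;>
        first
          | exact hsub hw₅.2
          | exact hsub hw₆.2
          | exact hsub hw₁.2
          | exact hsub hw₂.2
    · have hsum : (w₁.1 * s + t * w₁.2) + (w₂.1 * s + t * w₂.2) = c := by
        rw [hw₁e, hw₂e]; exact hysum
      rw [hs, ht] at hsum
      calc (∑ i, ![w₁.1, w₁.1, w₅.1, w₆.1, w₂.1, w₂.1, w₅.1, w₆.1] i *
              ![w₅.2, w₆.2, w₁.2, w₁.2, w₅.2, w₆.2, w₂.2, w₂.2] i)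
          = w₁.1 * w₅.2 + w₁.1 * w₆.2 + w₅.1 * w₁.2 + w₆.1 * w₁.2
            + w₂.1 * w₅.2 + w₂.1 * w₆.2 + w₅.1 * w₂.2 + w₆.1 * w₂.2 := by
            rw [Fin.sum_univ_eight]; rfl
        _ = c := by linear_combination hsum


end GlibichukAux

/-- **Glibichuk's lemma.**
Let `p` be a prime and `A, B ⊆ 𝔽_p` with `|A|·|B| > 2p`. Then every element of
`𝔽_p` is a sum `a₁·b₁ + … + a₈·b₈` with `aᵢ ∈ A`, `bᵢ ∈ B`; i.e. the 8-fold
sumset of the product set `A·B` is all of `𝔽_p`. -/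
theorem stmt_14 (p : ℕ) (hp : p.Prime) (A B : Finset (ZMod p))
    (h : 2 * p < A.card * B.card) :
    ∀ c : ZMod p, ∃ a b : Fin 8 → ZMod p,
      (∀ i, a i ∈ A) ∧ (∀ i, b i ∈ B) ∧ ∑ i, a i * b i = c :=
  GlibichukAux.main hp A B h
end

section
/- Let N be a positive integer, let f : {1, …, N} → ℤ be strictly increasing, and let γ₁, …, γ_N be complex numbers with |γ_n| = 1 for all n. Let J denote the number of quadruples (n, m, k, ℓ) ∈ {1, …, N}⁴ with f(n) + f(m) = f(k) + f(ℓ). Then ∫₀¹ |∑_{n=1}^{N} γ_n · e^{2πi α f(n)}| dα ≥ (N³ / J)^{1/2}. -/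
open Finset

open Finset Complex MeasureTheory

lemma orth (m : ℤ) : ∫ α in (0:ℝ)..1, Complex.exp (2 * (Real.pi:ℂ) * Complex.I * (α:ℂ) * (m:ℂ))
    = if m = 0 then 1 else 0 := by
  rcases eq_or_ne m 0 with hm | hm
  · simp [hm]
  · rw [if_neg hm]
    have hc : (2 * (Real.pi:ℂ) * Complex.I * (m:ℂ)) ≠ 0 := by
      simp [Real.pi_ne_zero, Complex.I_ne_zero, hm]
    have : ∀ α : ℝ, 2 * (Real.pi:ℂ) * Complex.I * (α:ℂ) * (m:ℂ)
        = (2 * (Real.pi:ℂ) * Complex.I * (m:ℂ)) * (α:ℂ) := fun α => by ring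
    simp_rw [this]
    rw [integral_exp_mul_complex hc]
    have h1 : Complex.exp (2 * (Real.pi:ℂ) * Complex.I * (m:ℂ) * (1:ℝ)) = 1 := by
      rw [Complex.ofReal_one, mul_one]
      have := Complex.exp_int_mul_two_pi_mul_I m
      rw [← this]; ring_nf
    rw [h1]
    simp

lemma key {ι : Type*} (A : Finset ι) (c : ι → ℂ) (g : ι → ℤ) :
    ∫ α in (0:ℝ)..1, ((∑ i ∈ A, c i * Complex.exp (2 * (Real.pi:ℂ) * Complex.I * (α:ℂ) * (g i : ℂ)))
        * (starRingEnd ℂ) (∑ j ∈ A, c j * Complex.exp (2 * (Real.pi:ℂ) * Complex.I * (α:ℂ) * (g j : ℂ))))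
    = ∑ i ∈ A, ∑ j ∈ A, if g i = g j then c i * (starRingEnd ℂ) (c j) else 0 := by
  have expand : ∀ α : ℝ,
      ((∑ i ∈ A, c i * Complex.exp (2 * (Real.pi:ℂ) * Complex.I * (α:ℂ) * (g i : ℂ)))
        * (starRingEnd ℂ) (∑ j ∈ A, c j * Complex.exp (2 * (Real.pi:ℂ) * Complex.I * (α:ℂ) * (g j : ℂ))))
      = ∑ i ∈ A, ∑ j ∈ A, (c i * (starRingEnd ℂ) (c j))
          * Complex.exp (2 * (Real.pi:ℂ) * Complex.I * (α:ℂ) * ((g i - g j : ℤ) : ℂ)) := by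
    intro α
    rw [map_sum, Finset.sum_mul_sum]
    refine Finset.sum_congr rfl fun i _ => Finset.sum_congr rfl fun j _ => ?_
    rw [map_mul, ← Complex.exp_conj]
    have : (starRingEnd ℂ) (2 * (Real.pi:ℂ) * Complex.I * (α:ℂ) * (g j : ℂ))
        = -(2 * (Real.pi:ℂ) * Complex.I * (α:ℂ) * (g j : ℂ)) := by
      simp only [map_mul, Complex.conj_I, Complex.conj_ofReal, map_ofNat, map_intCast]
      ring
    rw [this, mul_mul_mul_comm, ← Complex.exp_add]
    have : 2 * (Real.pi:ℂ) * Complex.I * (α:ℂ) * (g i : ℂ) + -(2 * (Real.pi:ℂ) * Complex.I * (α:ℂ) * (g j : ℂ))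
        = 2 * (Real.pi:ℂ) * Complex.I * (α:ℂ) * ((g i - g j : ℤ) : ℂ) := by
      push_cast; ring
    rw [this]
  simp_rw [expand]
  rw [intervalIntegral.integral_finset_sum (fun i _ => ?_)]
  · refine Finset.sum_congr rfl fun i _ => ?_
    rw [intervalIntegral.integral_finset_sum (fun j _ => ?_)]
    · refine Finset.sum_congr rfl fun j _ => ?_
      rw [intervalIntegral.integral_const_mul, orth]
      rcases eq_or_ne (g i) (g j) with h | h
      · simp [h, sub_eq_zero]
      · rw [if_neg h, if_neg (sub_ne_zero.mpr h), mul_zero]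
    · apply Continuous.intervalIntegrable
      fun_prop
  · apply Continuous.intervalIntegrable
    apply continuous_finset_sum
    intro j _
    fun_prop


/-- **Karatsuba's inequality for the `L¹`-norm of exponential sums.**
Let `f : {1, …, N} → ℤ` be strictly increasing and `γ₁, …, γ_N` unimodular
complex coefficients. If `J` is the number of quadruples
`(n, m, k, ℓ) ∈ {1, …, N}⁴` with `f(n) + f(m) = f(k) + f(ℓ)`, then
`∫₀¹ |∑_{n=1}^{N} γ_n e^{2πi α f(n)}| dα ≥ (N³/J)^{1/2}`. -/
theorem stmt_16 (N : ℕ) (hN : 0 < N) (f : ℕ → ℤ)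
    (hf : StrictMonoOn f (Set.Icc 1 N)) (γ : ℕ → ℂ)
    (hγ : ∀ n ∈ Finset.Icc 1 N, ‖γ n‖ = 1) :
    Real.sqrt ((N : ℝ) ^ 3 /
        (((Finset.Icc 1 N ×ˢ Finset.Icc 1 N ×ˢ Finset.Icc 1 N ×ˢ Finset.Icc 1 N).filter
            (fun q => f q.1 + f q.2.1 = f q.2.2.1 + f q.2.2.2)).card : ℝ))
      ≤ ∫ α in (0 : ℝ)..1,
          ‖∑ n ∈ Finset.Icc 1 N,
            γ n * Complex.exp (2 * (Real.pi : ℂ) * Complex.I * (α : ℂ) *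
              ((f n : ℤ) : ℂ))‖ := by
  set A := Finset.Icc 1 N with hA
  set S : ℝ → ℂ := fun α => ∑ n ∈ A, γ n * Complex.exp (2 * (Real.pi:ℂ) * Complex.I * (α:ℂ) * ((f n : ℤ):ℂ)) with hS
  set J := ((A ×ˢ A ×ˢ A ×ˢ A).filter (fun q => f q.1 + f q.2.1 = f q.2.2.1 + f q.2.2.2)).card with hJ
  have hScont : Continuous S := by
    apply continuous_finset_sum; intro n _; fun_prop
  -- pointwise bound
  have hSbound : ∀ α : ℝ, ‖S α‖ ≤ (N:ℝ) := by
    intro α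
    calc ‖S α‖ ≤ ∑ n ∈ A, ‖γ n * Complex.exp (2 * (Real.pi:ℂ) * Complex.I * (α:ℂ) * ((f n : ℤ):ℂ))‖ :=
          norm_sum_le _ _
      _ = ∑ n ∈ A, 1 := by
          refine Finset.sum_congr rfl fun n hn => ?_
          rw [norm_mul, hγ n hn, one_mul]
          have : 2 * (Real.pi:ℂ) * Complex.I * (α:ℂ) * ((f n : ℤ):ℂ)
              = ((2 * Real.pi * α * (f n : ℤ) : ℝ) : ℂ) * Complex.I := by push_cast; ring
          rw [this, Complex.norm_exp_ofReal_mul_I]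
      _ = (N:ℝ) := by simp [hA, Nat.sub_add_cancel hN]
  -- injectivity on the index set
  have hinj : ∀ i ∈ A, ∀ j ∈ A, f i = f j → i = j := by
    intro i hi j hj hij
    rw [hA, Finset.mem_Icc] at hi hj
    exact hf.injOn (Set.mem_Icc.mpr hi) (Set.mem_Icc.mpr hj) hij
  -- L² norm equals N
  have h2 : ∫ α in (0:ℝ)..1, ‖S α‖^2 = (N:ℝ) := by
    have hk := key A γ f
    have hpt : ∀ α : ℝ, S α * (starRingEnd ℂ) (S α) = ((‖S α‖^2 : ℝ) : ℂ) := by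
      intro α
      rw [Complex.mul_conj, Complex.normSq_eq_norm_sq]
    have hL : ∫ α in (0:ℝ)..1, S α * (starRingEnd ℂ) (S α) = ((∫ α in (0:ℝ)..1, ‖S α‖^2 : ℝ) : ℂ) := by
      simp_rw [hpt]; exact intervalIntegral.integral_ofReal
    have hRHS : (∑ i ∈ A, ∑ j ∈ A, if f i = f j then γ i * (starRingEnd ℂ) (γ j) else 0) = (N:ℂ) := by
      have : ∀ i ∈ A, (∑ j ∈ A, if f i = f j then γ i * (starRingEnd ℂ) (γ j) else 0)
          = γ i * (starRingEnd ℂ) (γ i) := by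
        intro i hi
        have step : (∑ j ∈ A, if f i = f j then γ i * (starRingEnd ℂ) (γ j) else 0)
            = ∑ j ∈ A, if j = i then γ i * (starRingEnd ℂ) (γ j) else 0 := by
          refine Finset.sum_congr rfl fun j hj => ?_
          by_cases h : j = i
          · simp [h]
          · rw [if_neg h, if_neg (fun hf' => h (hinj i hi j hj hf').symm)]
        rw [step, Finset.sum_ite_eq' A i (fun j => γ i * (starRingEnd ℂ) (γ j)), if_pos hi]
      rw [Finset.sum_congr rfl this]
      have : ∀ i ∈ A, γ i * (starRingEnd ℂ) (γ i) = 1 := by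
        intro i hi
        rw [Complex.mul_conj, Complex.normSq_eq_norm_sq, hγ i hi]
        norm_num
      rw [Finset.sum_congr rfl this]
      simp [hA, Nat.sub_add_cancel hN]
    rw [hL, hRHS] at hk
    exact_mod_cast hk
  -- expansion of the square
  have hsq : ∀ α : ℝ, S α ^ 2 = ∑ p ∈ A ×ˢ A, (γ p.1 * γ p.2) *
      Complex.exp (2 * (Real.pi:ℂ) * Complex.I * (α:ℂ) * ((f p.1 + f p.2 : ℤ):ℂ)) := by
    intro α
    rw [sq]
    show (∑ n ∈ A, γ n * Complex.exp (2 * (Real.pi:ℂ) * Complex.I * (α:ℂ) * ((f n : ℤ):ℂ))) *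
        (∑ n ∈ A, γ n * Complex.exp (2 * (Real.pi:ℂ) * Complex.I * (α:ℂ) * ((f n : ℤ):ℂ))) = _
    rw [Finset.sum_mul_sum, Finset.sum_product]
    refine Finset.sum_congr rfl fun i _ => Finset.sum_congr rfl fun j _ => ?_
    rw [mul_mul_mul_comm, ← Complex.exp_add]
    congr 1
    push_cast; ring
  -- L⁴ bound
  have h4 : ∫ α in (0:ℝ)..1, ‖S α‖^4 ≤ (J:ℝ) := by
    have hk4 := key (A ×ˢ A) (fun p => γ p.1 * γ p.2) (fun p => f p.1 + f p.2)
    have hpt4 : ∀ α : ℝ,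
        ((∑ p ∈ A ×ˢ A, (γ p.1 * γ p.2) * Complex.exp (2 * (Real.pi:ℂ) * Complex.I * (α:ℂ) * ((f p.1 + f p.2 : ℤ):ℂ)))
          * (starRingEnd ℂ) (∑ p ∈ A ×ˢ A, (γ p.1 * γ p.2) * Complex.exp (2 * (Real.pi:ℂ) * Complex.I * (α:ℂ) * ((f p.1 + f p.2 : ℤ):ℂ))))
        = ((‖S α‖^4 : ℝ) : ℂ) := by
      intro α
      rw [← hsq α, Complex.mul_conj, Complex.normSq_eq_norm_sq, norm_pow]
      push_cast; ring
    simp_rw [hpt4] at hk4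
    rw [intervalIntegral.integral_ofReal] at hk4
    set R := ∑ i ∈ A ×ˢ A, ∑ j ∈ A ×ˢ A,
        if f i.1 + f i.2 = f j.1 + f j.2 then (γ i.1 * γ i.2) * (starRingEnd ℂ) (γ j.1 * γ j.2) else 0 with hR
    have hnorm : ‖R‖ ≤ (J:ℝ) := by
      calc ‖R‖ ≤ ∑ p ∈ A ×ˢ A, ∑ q ∈ A ×ˢ A,
            (if f p.1 + f p.2 = f q.1 + f q.2 then (1:ℝ) else 0) := by
            refine (norm_sum_le _ _).trans (Finset.sum_le_sum fun p hp =>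
              (norm_sum_le _ _).trans (Finset.sum_le_sum fun q hq => ?_))
            by_cases h : f p.1 + f p.2 = f q.1 + f q.2
            · rw [if_pos h, if_pos h]
              obtain ⟨hp1, hp2⟩ := Finset.mem_product.mp hp
              obtain ⟨hq1, hq2⟩ := Finset.mem_product.mp hq
              rw [norm_mul, norm_mul, RCLike.norm_conj, norm_mul,
                hγ _ hp1, hγ _ hp2, hγ _ hq1, hγ _ hq2]
              norm_num
            · simp [h]
        _ = (J:ℝ) := by
            rw [← Finset.sum_product']
            rw [Finset.sum_boole]
            norm_cast
            rw [hJ]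
            refine Finset.card_nbij' (fun x => (x.1.1, x.1.2, x.2.1, x.2.2))
              (fun q => ((q.1, q.2.1), (q.2.2.1, q.2.2.2))) ?_ ?_ ?_ ?_
            · intro x hx
              simp only [Finset.mem_coe, Finset.mem_filter, Finset.mem_product] at hx ⊢
              tauto
            · intro x hx
              simp only [Finset.mem_coe, Finset.mem_filter, Finset.mem_product] at hx ⊢
              tauto
            · intro x _; rfl
            · intro x _; rfl
    calc ∫ α in (0:ℝ)..1, ‖S α‖^4 ≤ |∫ α in (0:ℝ)..1, ‖S α‖^4| := le_abs_self _
      _ = ‖R‖ := by rw [← hk4, Complex.norm_real, Real.norm_eq_abs]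
      _ ≤ (J:ℝ) := hnorm
  -- J is positive
  have hJpos : 0 < J := by
    rw [hJ]
    apply Finset.card_pos.mpr
    refine ⟨(1, 1, 1, 1), ?_⟩
    simp only [Finset.mem_filter, Finset.mem_product, hA, Finset.mem_Icc]
    exact ⟨⟨⟨le_rfl, hN⟩, ⟨le_rfl, hN⟩, ⟨le_rfl, hN⟩, le_rfl, hN⟩, trivial⟩
  have hJposR : (0:ℝ) < (J:ℝ) := by exact_mod_cast hJpos
  set I1 := ∫ α in (0:ℝ)..1, ‖S α‖ with hI1def
  have hI1nonneg : 0 ≤ I1 :=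
    intervalIntegral.integral_nonneg zero_le_one (fun _ _ => norm_nonneg _)
  have hI4nonneg : 0 ≤ ∫ α in (0:ℝ)..1, ‖S α‖^4 :=
    intervalIntegral.integral_nonneg zero_le_one (fun x _ => by positivity)
  -- Hölder's inequality
  set μ := MeasureTheory.volume.restrict (Set.Ioc (0:ℝ) 1) with hμ
  haveI : MeasureTheory.IsFiniteMeasure μ := by
    constructor
    rw [hμ, MeasureTheory.Measure.restrict_apply_univ]
    simp [Real.volume_Ioc]
  have hFmem : MeasureTheory.MemLp (fun α => ‖S α‖ ^ ((2:ℝ)/3)) (ENNReal.ofReal (3/2)) μ := by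
    refine MeasureTheory.MemLp.of_bound
      ((hScont.norm.rpow_const (fun x => Or.inr (by norm_num))).aestronglyMeasurable)
      ((N:ℝ) ^ ((2:ℝ)/3)) (MeasureTheory.ae_of_all _ fun x => ?_)
    rw [Real.norm_of_nonneg (Real.rpow_nonneg (norm_nonneg _) _)]
    exact Real.rpow_le_rpow (norm_nonneg _) (hSbound x) (by norm_num)
  have hGmem : MeasureTheory.MemLp (fun α => ‖S α‖ ^ ((4:ℝ)/3)) (ENNReal.ofReal 3) μ := by
    refine MeasureTheory.MemLp.of_bound
      ((hScont.norm.rpow_const (fun x => Or.inr (by norm_num))).aestronglyMeasurable)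
      ((N:ℝ) ^ ((4:ℝ)/3)) (MeasureTheory.ae_of_all _ fun x => ?_)
    rw [Real.norm_of_nonneg (Real.rpow_nonneg (norm_nonneg _) _)]
    exact Real.rpow_le_rpow (norm_nonneg _) (hSbound x) (by norm_num)
  have hconj : Real.HolderConjugate (3/2) 3 := ⟨by norm_num, by norm_num, by norm_num⟩
  have hH := MeasureTheory.integral_mul_le_Lp_mul_Lq_of_nonneg hconj
    (MeasureTheory.ae_of_all _ fun x => Real.rpow_nonneg (norm_nonneg (S x)) ((2:ℝ)/3))
    (MeasureTheory.ae_of_all _ fun x => Real.rpow_nonneg (norm_nonneg (S x)) ((4:ℝ)/3))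
    hFmem hGmem
  have e1 : ∀ a : ℝ, ‖S a‖^((2:ℝ)/3) * ‖S a‖^((4:ℝ)/3) = ‖S a‖^2 := fun a => by
    rw [← Real.rpow_add' (norm_nonneg _) (by norm_num : (2:ℝ)/3 + 4/3 ≠ 0),
      show (2:ℝ)/3 + 4/3 = ((2:ℕ):ℝ) by norm_num, Real.rpow_natCast]
  have e2 : ∀ a : ℝ, (‖S a‖^((2:ℝ)/3))^((3:ℝ)/2) = ‖S a‖ := fun a => by
    rw [← Real.rpow_mul (norm_nonneg _), show (2:ℝ)/3 * (3/2) = 1 by norm_num, Real.rpow_one]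
  have e3 : ∀ a : ℝ, (‖S a‖^((4:ℝ)/3))^((3:ℝ)) = ‖S a‖^4 := fun a => by
    rw [← Real.rpow_mul (norm_nonneg _), show (4:ℝ)/3 * 3 = ((4:ℕ):ℝ) by norm_num,
      Real.rpow_natCast]
  simp_rw [e1, e2, e3] at hH
  rw [show (1:ℝ)/(3/2) = 2/3 by norm_num] at hH
  have c2 : ∫ α in (0:ℝ)..1, ‖S α‖^2 = ∫ a, ‖S a‖^2 ∂μ := by
    rw [intervalIntegral.integral_of_le zero_le_one]
  have c1 : I1 = ∫ a, ‖S a‖ ∂μ := by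
    rw [hI1def, intervalIntegral.integral_of_le zero_le_one]
  have c4 : ∫ α in (0:ℝ)..1, ‖S α‖^4 = ∫ a, ‖S a‖^4 ∂μ := by
    rw [intervalIntegral.integral_of_le zero_le_one]
  rw [← c2, ← c1, ← c4, h2] at hH
  -- combine with the L⁴ bound
  have hmain : (N:ℝ) ≤ I1 ^ ((2:ℝ)/3) * (J:ℝ) ^ ((1:ℝ)/3) := by
    refine hH.trans (mul_le_mul_of_nonneg_left ?_ (Real.rpow_nonneg hI1nonneg _))
    exact Real.rpow_le_rpow hI4nonneg h4 (by norm_num)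
  have hcube := Real.rpow_le_rpow (Nat.cast_nonneg N) hmain (by norm_num : (0:ℝ) ≤ 3)
  rw [Real.mul_rpow (Real.rpow_nonneg hI1nonneg _) (Real.rpow_nonneg (Nat.cast_nonneg J) _),
    ← Real.rpow_mul hI1nonneg, ← Real.rpow_mul (Nat.cast_nonneg J),
    show (2:ℝ)/3 * 3 = ((2:ℕ):ℝ) by norm_num, show (1:ℝ)/3 * 3 = 1 by norm_num,
    Real.rpow_natCast, Real.rpow_one,
    show ((3:ℝ)) = ((3:ℕ):ℝ) from by norm_num, Real.rpow_natCast] at hcube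
  -- hcube : (N:ℝ)^3 ≤ I1^2 * J
  have hdiv : ((N:ℝ))^3 / (J:ℝ) ≤ I1^2 := by
    rw [div_le_iff₀ hJposR]; exact hcube
  show Real.sqrt ((N:ℝ)^3 / (J:ℝ)) ≤ I1
  exact (Real.sqrt_le_sqrt hdiv).trans_eq (Real.sqrt_sq hI1nonneg)
end
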